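/- arXiv:1009.3956 — 6 statements merged into one kernel-verified Lean document; each statement's English description precedes it below -/
import Mathlib

section
/- Let x > 0 be real, let n₀ ≥ 1, a ≥ 1, q ≥ 1, r be integers with 0 ≤ r < q, and let Q be a real with q ≤ Q ≤ n₀ · x^{−1/3}. Suppose |x/n₀² − a/q| ≤ 1/(qQ). Then |x/(n₀ + r) − (x/n₀ − a·r/q)| ≤ 2/q. -/
/-- If `|x/n₀² − a/q| ≤ 1/(qQ)` with `0 ≤ r < q ≤ Q ≤ n₀ x^{−1/3}`, then
`|x/(n₀+r) − (x/n₀ − ar/q)| ≤ 2/q`. -/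
theorem linear_approximation_bound (x : ℝ) (hx : 0 < x) (n₀ a q r : ℤ)
    (hn₀ : 1 ≤ n₀) (ha : 1 ≤ a) (hq : 1 ≤ q) (hr0 : 0 ≤ r) (hrq : r < q)
    (Q : ℝ) (hqQ : (q : ℝ) ≤ Q) (hQ : Q ≤ (n₀ : ℝ) * x ^ (-(1/3) : ℝ))
    (happ : |x / (n₀ : ℝ) ^ 2 - (a : ℝ) / (q : ℝ)| ≤ 1 / ((q : ℝ) * Q)) :
    |x / ((n₀ : ℝ) + (r : ℝ)) - (x / (n₀ : ℝ) - (a : ℝ) * (r : ℝ) / (q : ℝ))| ≤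
      2 / (q : ℝ) := by
  have hN : (1:ℝ) ≤ (n₀:ℝ) := by exact_mod_cast hn₀
  have hNpos : (0:ℝ) < (n₀:ℝ) := by linarith
  have hR : (0:ℝ) ≤ (r:ℝ) := by exact_mod_cast hr0
  have hqpos : (0:ℝ) < (q:ℝ) := by exact_mod_cast hq
  have hrq' : (r:ℝ) < (q:ℝ) := by exact_mod_cast hrq
  have hQpos : 0 < Q := lt_of_lt_of_le hqpos hqQ
  have hNR : (0:ℝ) < (n₀:ℝ) + (r:ℝ) := by linarith
  have hx3 : (0:ℝ) < x ^ ((1:ℝ)/3) := Real.rpow_pos_of_pos hx _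
  have hqx : (q:ℝ) * x ^ ((1:ℝ)/3) ≤ (n₀:ℝ) := by
    have h := hqQ.trans hQ
    rw [Real.rpow_neg hx.le] at h
    calc (q:ℝ) * x ^ ((1:ℝ)/3) ≤ ((n₀:ℝ) * (x ^ ((1:ℝ)/3))⁻¹) * x ^ ((1:ℝ)/3) := by
          exact mul_le_mul_of_nonneg_right h hx3.le
      _ = (n₀:ℝ) := by field_simp
  have hcube : (q:ℝ)^3 * x ≤ (n₀:ℝ)^3 := by
    have h3 : ((q:ℝ) * x ^ ((1:ℝ)/3))^3 ≤ (n₀:ℝ)^3 :=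
      pow_le_pow_left₀ (by positivity) hqx 3
    have hx13 : (x ^ ((1:ℝ)/3))^3 = x := by
      rw [← Real.rpow_natCast (x ^ ((1:ℝ)/3)) 3, ← Real.rpow_mul hx.le]
      norm_num
    calc (q:ℝ)^3 * x = ((q:ℝ) * x ^ ((1:ℝ)/3))^3 := by rw [mul_pow, hx13]
      _ ≤ _ := h3
  have hE : x / ((n₀:ℝ) + (r:ℝ)) - (x / (n₀:ℝ) - (a:ℝ) * (r:ℝ) / (q:ℝ))
      = (r:ℝ) * ((a:ℝ)/(q:ℝ) - x/(n₀:ℝ)^2)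
        + x * (r:ℝ)^2 / ((n₀:ℝ)^2 * ((n₀:ℝ)+(r:ℝ))) := by
    field_simp
    ring
  rw [hE]
  have h1 : |(r:ℝ) * ((a:ℝ)/(q:ℝ) - x/(n₀:ℝ)^2)| ≤ 1/(q:ℝ) := by
    rw [abs_mul, abs_of_nonneg hR]
    have step : (r:ℝ) * |(a:ℝ)/(q:ℝ) - x/(n₀:ℝ)^2| ≤ (r:ℝ) * (1/((q:ℝ)*Q)) := by
      apply mul_le_mul_of_nonneg_left _ hR
      rw [abs_sub_comm]; exact happ
    refine step.trans ?_
    rw [mul_one_div, div_le_div_iff₀ (by positivity) hqpos]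
    nlinarith [hrq'.le.trans hqQ]
  have h2 : x * (r:ℝ)^2 / ((n₀:ℝ)^2 * ((n₀:ℝ)+(r:ℝ))) ≤ 1/(q:ℝ) := by
    rw [div_le_div_iff₀ (by positivity) hqpos]
    have hr2 : (r:ℝ)^2 ≤ (q:ℝ)^2 := by nlinarith
    nlinarith [mul_le_mul_of_nonneg_left hr2 hx.le]
  have habs2 : |x * (r:ℝ)^2 / ((n₀:ℝ)^2 * ((n₀:ℝ)+(r:ℝ)))|
      = x * (r:ℝ)^2 / ((n₀:ℝ)^2 * ((n₀:ℝ)+(r:ℝ))) :=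
    abs_of_nonneg (by positivity)
  calc |(r:ℝ) * ((a:ℝ)/(q:ℝ) - x/(n₀:ℝ)^2)
        + x * (r:ℝ)^2 / ((n₀:ℝ)^2 * ((n₀:ℝ)+(r:ℝ)))|
      ≤ |(r:ℝ) * ((a:ℝ)/(q:ℝ) - x/(n₀:ℝ)^2)|
        + |x * (r:ℝ)^2 / ((n₀:ℝ)^2 * ((n₀:ℝ)+(r:ℝ)))| := abs_add_le _ _
    _ ≤ 2/(q:ℝ) := by rw [habs2]; rw [show (2:ℝ)/(q:ℝ) = 1/(q:ℝ) + 1/(q:ℝ) by ring]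
                      exact add_le_add h1 h2
end

section
/- Let q ≥ 1 and a be integers with gcd(a,q) = 1, let y be a real number, and let α₀, …, α_{q−1} be real numbers such that |α_r − (y − a·r/q)| ≤ 2/q for every r ∈ {0, …, q−1}. Then the number of r ∈ {0, …, q−1} with ⌊α_r⌋ ≠ ⌊y − a·r/q⌋ is at most 5. -/
/-- If `gcd(a,q) = 1` and `|α_r − (y − ar/q)| ≤ 2/q` for `0 ≤ r < q`, then
`⌊α_r⌋ ≠ ⌊y − ar/q⌋` for at most `5` values of `r`. -/
theorem few_floor_discrepancies (q : ℤ) (hq : 1 ≤ q) (a : ℤ) (hgcd : Int.gcd a q = 1)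
    (y : ℝ) (α : ℤ → ℝ)
    (hα : ∀ r ∈ Finset.Ico (0 : ℤ) q, |α r - (y - (a : ℝ) * (r : ℝ) / (q : ℝ))| ≤ 2 / (q : ℝ)) :
    ((Finset.Ico (0 : ℤ) q).filter
        (fun r => ⌊α r⌋ ≠ ⌊y - (a : ℝ) * (r : ℝ) / (q : ℝ)⌋)).card ≤ 5 := by
  classical
  have hq0 : (0:ℝ) < (q:ℝ) := by exact_mod_cast hq
  set M : ℤ := ⌊(q:ℝ) * y⌋ with hM
  set T : Finset ℤ := {0 % q, 1 % q, (-2) % q, (-1) % q} with hT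
  set S : Finset ℤ := (Finset.Ico (0 : ℤ) q).filter
      (fun r => ⌊α r⌋ ≠ ⌊y - (a : ℝ) * (r : ℝ) / (q : ℝ)⌋) with hS
  have hmem : ∀ r ∈ S, (M - a * r) % q ∈ T := by
    intro r hr
    simp only [hS, Finset.mem_filter, Finset.mem_Ico] at hr
    obtain ⟨⟨hr0, hrq⟩, hne⟩ := hr
    set x : ℝ := y - (a : ℝ) * (r : ℝ) / (q : ℝ) with hx
    have hαr : |α r - x| ≤ 2 / q := hα r (Finset.mem_Ico.mpr ⟨hr0, hrq⟩)
    have habs1 : α r - x ≤ 2 / q := (abs_le.mp hαr).2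
    have habs2 : -(2/q) ≤ α r - x := (abs_le.mp hαr).1
    have hqx : (q:ℝ) * x = (q:ℝ) * y - ((a * r : ℤ) : ℝ) := by
      rw [hx]
      push_cast
      field_simp
    have hfloor : ⌊(q:ℝ) * x⌋ = M - a * r := by
      rw [hqx, Int.floor_sub_intCast, hM]
    set n : ℤ := ⌊x⌋ with hn
    have hxl : (n : ℝ) ≤ x := Int.floor_le x
    have hxu : x < n + 1 := Int.lt_floor_add_one x
    have key : M - a * r = q * n ∨ M - a * r = q * n + 1 ∨
        M - a * r = q * n + q - 2 ∨ M - a * r = q * n + q - 1 := by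
      rcases lt_or_gt_of_ne hne with h | h
      · -- ⌊α r⌋ < n
        have h1 : α r < (n : ℝ) := by
          have h2 := Int.lt_floor_add_one (α r)
          have h3 : (⌊α r⌋ : ℝ) + 1 ≤ (n : ℝ) := by exact_mod_cast h
          linarith
        have hl : q * n ≤ ⌊(q:ℝ) * x⌋ := by
          rw [Int.le_floor]
          push_cast
          nlinarith
        have hu : ⌊(q:ℝ) * x⌋ < q * n + 2 := by
          rw [Int.floor_lt]
          push_cast
          have hxlt : x < (n : ℝ) + 2 / q := by linarith
          have h2 := mul_lt_mul_of_pos_left hxlt hq0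
          have h3 : (q:ℝ) * ((n:ℝ) + 2 / q) = q * n + 2 := by field_simp
          rw [h3] at h2
          linarith
        rw [hfloor] at hl hu
        omega
      · -- n < ⌊α r⌋
        have h1 : (n : ℝ) + 1 ≤ α r := by
          have h2 : (n : ℝ) + 1 ≤ (⌊α r⌋ : ℝ) := by exact_mod_cast h
          have h3 := Int.floor_le (α r)
          linarith
        have hl : q * n + q - 2 ≤ ⌊(q:ℝ) * x⌋ := by
          rw [Int.le_floor]
          push_cast
          have hxgt : (n : ℝ) + 1 - 2 / q ≤ x := by linarith
          have h2 := mul_le_mul_of_nonneg_left hxgt hq0.le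
          have h3 : (q:ℝ) * ((n:ℝ) + 1 - 2 / q) = q * n + q - 2 := by field_simp
          rw [h3] at h2
          linarith
        have hu : ⌊(q:ℝ) * x⌋ < q * n + q := by
          rw [Int.floor_lt]
          push_cast
          nlinarith
        rw [hfloor] at hl hu
        omega
    rcases key with h | h | h | h
    · have h' : M - a * r = 0 + q * n := by rw [h]; ring
      rw [h', Int.add_mul_emod_self_left]
      simp [hT]
    · have h' : M - a * r = 1 + q * n := by rw [h]; ring
      rw [h', Int.add_mul_emod_self_left]
      simp [hT]
    · have h' : M - a * r = -2 + q * (n + 1) := by rw [h]; ring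
      rw [h', Int.add_mul_emod_self_left]
      simp [hT]
    · have h' : M - a * r = -1 + q * (n + 1) := by rw [h]; ring
      rw [h', Int.add_mul_emod_self_left]
      simp [hT]
  have hinj : Set.InjOn (fun r => (M - a * r) % q) ↑S := by
    intro r₁ h₁ r₂ h₂ h
    simp only [hS, Finset.coe_filter, Set.mem_setOf_eq, Finset.mem_Ico] at h₁ h₂
    have hmod : M - a * r₁ ≡ M - a * r₂ [ZMOD q] := by
      simpa [Int.ModEq] using h
    have hdvd : q ∣ a * (r₂ - r₁) := by
      have := ((Int.ModEq.refl M).sub hmod).dvd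
      have h2 : M - (M - a * r₂) - (M - (M - a * r₁)) = a * (r₂ - r₁) := by ring
      rwa [h2] at this
    have hco : IsCoprime (q : ℤ) a := by
      rw [Int.isCoprime_iff_gcd_eq_one, Int.gcd_comm]
      exact hgcd
    have hdvd2 : q ∣ r₂ - r₁ := hco.dvd_of_dvd_mul_left hdvd
    have h0 : r₂ - r₁ = 0 := by
      apply Int.eq_zero_of_dvd_of_natAbs_lt_natAbs hdvd2
      omega
    omega
  have hcard : T.card ≤ 4 := by
    have h1 := Finset.card_insert_le (1 % q) ({(-2) % q, (-1) % q} : Finset ℤ)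
    have h2 := Finset.card_insert_le ((-2) % q) ({(-1) % q} : Finset ℤ)
    have h3 := Finset.card_insert_le (0 % q) ({1 % q, (-2) % q, (-1) % q} : Finset ℤ)
    have h4 : ({(-1) % q} : Finset ℤ).card = 1 := Finset.card_singleton _
    rw [hT]
    omega
  calc S.card ≤ T.card := Finset.card_le_card_of_injOn _ hmem hinj
    _ ≤ 4 := hcard
    _ ≤ 5 := by norm_num
end

section
/- Let a, b be reals with 1 ≤ a < b. Then in the polynomial ring ℤ[t]: Σ_{(n,m) : n,m ≥ 1, a < nm ≤ b} t^{nm} = 2 Σ_{n : 1 ≤ n ≤ √b} Σ_{m : a/n < m ≤ b/n} t^{nm} − Σ_{n : 1 ≤ n ≤ √b} Σ_{m : a/n < m ≤ √b} t^{nm}, where all sums range over positive integers (or pairs of positive integers) satisfying the indicated conditions. -/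
open Polynomial in
/-- For reals `1 ≤ a < b`, in `ℤ[t]`:
`∑_{a < nm ≤ b} t^{nm} = 2 ∑_{n ≤ √b} ∑_{a/n < m ≤ b/n} t^{nm} − ∑_{n ≤ √b} ∑_{a/n < m ≤ √b} t^{nm}`. -/
theorem hyperbola_polynomial_identity (a b : ℝ) (ha : 1 ≤ a) (hab : a < b) :
    ∑ p ∈ (Finset.Icc 1 ⌊b⌋₊ ×ˢ Finset.Icc 1 ⌊b⌋₊).filter
        (fun p => a < ((p.1 * p.2 : ℕ) : ℝ) ∧ ((p.1 * p.2 : ℕ) : ℝ) ≤ b),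
      (X : ℤ[X]) ^ (p.1 * p.2) =
      2 * ∑ n ∈ Finset.Icc 1 ⌊Real.sqrt b⌋₊,
          ∑ m ∈ (Finset.Icc 1 ⌊b⌋₊).filter
            (fun m : ℕ => a / (n : ℝ) < (m : ℝ) ∧ (m : ℝ) ≤ b / (n : ℝ)),
          (X : ℤ[X]) ^ (n * m)
      - ∑ n ∈ Finset.Icc 1 ⌊Real.sqrt b⌋₊,
          ∑ m ∈ (Finset.Icc 1 ⌊Real.sqrt b⌋₊).filter
            (fun m : ℕ => a / (n : ℝ) < (m : ℝ)),
          (X : ℤ[X]) ^ (n * m) := by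
  have hb1 : (1 : ℝ) ≤ b := ha.trans hab.le
  have hb0 : (0 : ℝ) ≤ b := by linarith
  set r := ⌊Real.sqrt b⌋₊ with hr
  set B := ⌊b⌋₊ with hB
  have hsb : Real.sqrt b ≤ b := by
    nlinarith [Real.sq_sqrt hb0, sq_nonneg (Real.sqrt b - 1)]
  have hrB : r ≤ B := Nat.floor_le_floor hsb
  have hcast_r : ∀ n : ℕ, n ≤ r → (n : ℝ) ≤ Real.sqrt b := fun n hn =>
    le_trans (Nat.cast_le.2 hn) (Nat.floor_le (Real.sqrt_nonneg b))
  have hle_r : ∀ n : ℕ, (n : ℝ) ≤ Real.sqrt b → n ≤ r := fun n hn => Nat.le_floor hn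
  have hsq : Real.sqrt b * Real.sqrt b = b := Real.mul_self_sqrt hb0
  set T := (Finset.Icc 1 B ×ˢ Finset.Icc 1 B).filter
      (fun p => a < ((p.1 * p.2 : ℕ) : ℝ) ∧ ((p.1 * p.2 : ℕ) : ℝ) ≤ b) with hT
  set A1 := T.filter (fun p => p.1 ≤ r) with hA1
  set A2 := T.filter (fun p => p.2 ≤ r) with hA2
  have hmemT : ∀ p : ℕ × ℕ, p ∈ T ↔
      (1 ≤ p.1 ∧ p.1 ≤ B) ∧ (1 ≤ p.2 ∧ p.2 ≤ B) ∧
      a < ((p.1 : ℝ) * p.2) ∧ ((p.1 : ℝ) * p.2) ≤ b := by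
    intro p
    simp only [hT, Finset.mem_filter, Finset.mem_product, Finset.mem_Icc]
    push_cast
    tauto
  -- covering : A1 ∪ A2 = T
  have hcover : A1 ∪ A2 = T := by
    ext p
    simp only [hA1, hA2, Finset.mem_union, Finset.mem_filter]
    constructor
    · rintro (⟨h, _⟩ | ⟨h, _⟩) <;> exact h
    · intro hp
      obtain ⟨⟨hn1, _⟩, ⟨hm1, _⟩, _, hub⟩ := (hmemT p).1 hp
      rcases le_total p.1 p.2 with hle | hle
      · refine Or.inl ⟨hp, hle_r _ ?_⟩
        rw [show (p.1 : ℝ) = Real.sqrt ((p.1 : ℝ) * p.1) by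
          rw [Real.sqrt_mul_self (by positivity)]]
        exact Real.sqrt_le_sqrt (le_trans (by
          have : (p.1 : ℝ) ≤ p.2 := Nat.cast_le.2 hle
          nlinarith [Nat.cast_nonneg' (α := ℝ) p.1]) hub)
      · refine Or.inr ⟨hp, hle_r _ ?_⟩
        rw [show (p.2 : ℝ) = Real.sqrt ((p.2 : ℝ) * p.2) by
          rw [Real.sqrt_mul_self (by positivity)]]
        exact Real.sqrt_le_sqrt (le_trans (by
          have : (p.2 : ℝ) ≤ p.1 := Nat.cast_le.2 hle
          nlinarith [Nat.cast_nonneg' (α := ℝ) p.2]) hub)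
  -- A1 as a filtered product
  have hA1eq : A1 = (Finset.Icc 1 r ×ˢ Finset.Icc 1 B).filter
      (fun p : ℕ × ℕ => a / (p.1 : ℝ) < p.2 ∧ (p.2 : ℝ) ≤ b / p.1) := by
    ext p
    simp only [hA1, Finset.mem_filter, Finset.mem_product, Finset.mem_Icc, hmemT]
    constructor
    · rintro ⟨⟨⟨hn1, hnB⟩, ⟨hm1, hmB⟩, hlo, hhi⟩, hnr⟩
      have hnpos : (0 : ℝ) < p.1 := by exact_mod_cast hn1
      refine ⟨⟨⟨hn1, hnr⟩, hm1, hmB⟩, ?_, ?_⟩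
      · rw [div_lt_iff₀ hnpos]; linarith [hlo, mul_comm (p.1 : ℝ) p.2]
      · rw [le_div_iff₀ hnpos]; linarith [hhi, mul_comm (p.1 : ℝ) p.2]
    · rintro ⟨⟨⟨hn1, hnr⟩, hm1, hmB⟩, hlo, hhi⟩
      have hnpos : (0 : ℝ) < p.1 := by exact_mod_cast hn1
      rw [div_lt_iff₀ hnpos] at hlo
      rw [le_div_iff₀ hnpos] at hhi
      exact ⟨⟨⟨hn1, hnr.trans hrB⟩, ⟨hm1, hmB⟩, by nlinarith, by nlinarith⟩, hnr⟩
  -- A1 ∩ A2 as a filtered product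
  have hIeq : A1 ∩ A2 = (Finset.Icc 1 r ×ˢ Finset.Icc 1 r).filter
      (fun p : ℕ × ℕ => a / (p.1 : ℝ) < p.2) := by
    ext p
    simp only [hA1, hA2, Finset.mem_inter, Finset.mem_filter, Finset.mem_product,
      Finset.mem_Icc, hmemT]
    constructor
    · rintro ⟨⟨⟨⟨hn1, _⟩, ⟨hm1, _⟩, hlo, _⟩, hnr⟩, ⟨_, hmr⟩⟩
      have hnpos : (0 : ℝ) < p.1 := by exact_mod_cast hn1
      refine ⟨⟨⟨hn1, hnr⟩, hm1, hmr⟩, ?_⟩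
      rw [div_lt_iff₀ hnpos]; linarith [hlo, mul_comm (p.1 : ℝ) p.2]
    · rintro ⟨⟨⟨hn1, hnr⟩, hm1, hmr⟩, hlo⟩
      have hnpos : (0 : ℝ) < p.1 := by exact_mod_cast hn1
      rw [div_lt_iff₀ hnpos] at hlo
      have hub : ((p.1 : ℝ) * p.2) ≤ b := by
        calc ((p.1 : ℝ) * p.2) ≤ Real.sqrt b * Real.sqrt b :=
              mul_le_mul (hcast_r _ hnr) (hcast_r _ hmr) (by positivity)
                (Real.sqrt_nonneg b)
          _ = b := hsq
      exact ⟨⟨⟨⟨hn1, hnr.trans hrB⟩, ⟨hm1, hmr.trans hrB⟩, by nlinarith, hub⟩, hnr⟩,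
        ⟨⟨⟨hn1, hnr.trans hrB⟩, ⟨hm1, hmr.trans hrB⟩, by nlinarith, hub⟩, hmr⟩⟩
  -- sums over A1 and A1 ∩ A2 equal the iterated sums
  have hsumA1 : ∑ p ∈ A1, (X : ℤ[X]) ^ (p.1 * p.2) =
      ∑ n ∈ Finset.Icc 1 r, ∑ m ∈ (Finset.Icc 1 B).filter
        (fun m : ℕ => a / (n : ℝ) < (m : ℝ) ∧ (m : ℝ) ≤ b / (n : ℝ)),
        (X : ℤ[X]) ^ (n * m) := by
    rw [hA1eq, Finset.sum_filter, Finset.sum_product]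
    simp_rw [← Finset.sum_filter]
  have hsumI : ∑ p ∈ A1 ∩ A2, (X : ℤ[X]) ^ (p.1 * p.2) =
      ∑ n ∈ Finset.Icc 1 r, ∑ m ∈ (Finset.Icc 1 r).filter
        (fun m : ℕ => a / (n : ℝ) < (m : ℝ)),
        (X : ℤ[X]) ^ (n * m) := by
    rw [hIeq, Finset.sum_filter, Finset.sum_product]
    simp_rw [← Finset.sum_filter]
  -- sum over A2 equals sum over A1 by symmetry
  have hsumA2 : ∑ p ∈ A2, (X : ℤ[X]) ^ (p.1 * p.2) =
      ∑ p ∈ A1, (X : ℤ[X]) ^ (p.1 * p.2) := by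
    have hswapT : ∀ p : ℕ × ℕ, p ∈ T → p.swap ∈ T := by
      intro p hp
      rw [hmemT] at hp
      rw [hmemT]
      refine ⟨hp.2.1, hp.1, ?_, ?_⟩
      · rw [Prod.fst_swap, Prod.snd_swap, mul_comm]
        exact hp.2.2.1
      · rw [Prod.fst_swap, Prod.snd_swap, mul_comm]
        exact hp.2.2.2
    refine Finset.sum_nbij' Prod.swap Prod.swap ?_ ?_
      (fun p _ => Prod.swap_swap p) (fun p _ => Prod.swap_swap p) ?_
    · intro p hp
      simp only [hA2, Finset.mem_filter] at hp
      simp only [hA1, Finset.mem_filter]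
      exact ⟨hswapT p hp.1, hp.2⟩
    · intro p hp
      simp only [hA1, Finset.mem_filter] at hp
      simp only [hA2, Finset.mem_filter]
      exact ⟨hswapT p hp.1, hp.2⟩
    · intro p _
      rw [Prod.fst_swap, Prod.snd_swap, mul_comm]
  -- inclusion-exclusion
  have hIE : ∑ p ∈ A1 ∪ A2, (X : ℤ[X]) ^ (p.1 * p.2)
      + ∑ p ∈ A1 ∩ A2, (X : ℤ[X]) ^ (p.1 * p.2)
      = ∑ p ∈ A1, (X : ℤ[X]) ^ (p.1 * p.2) + ∑ p ∈ A2, (X : ℤ[X]) ^ (p.1 * p.2) :=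
    Finset.sum_union_inter
  rw [hcover, hsumA2, hsumA1, hsumI] at hIE
  linear_combination hIE
end

section
/- Define τ₂(n) as the number of ordered triples (a,b,c) of positive integers with abc = n, and for n ≥ 1 let h(n) := Σ_{d : d³ ∣ n} μ(d) τ₂(n/d³), where d ranges over positive integers with d³ dividing n. Then for every integer n ≥ 2: if n = p^k for some prime p and integer k ≥ 1, then h(n) = 3k; otherwise, 9 divides h(n). -/
open ArithmeticFunction Finset
open scoped ArithmeticFunction.zeta ArithmeticFunction.Moebius

/-- `τ₂(n)`: the number of ordered triples `(a,b,c)` of positive integers with `abc = n`. -/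
noncomputable def tau2 (n : ℕ) : ℕ :=
  ({t : ℕ × ℕ × ℕ | 0 < t.1 ∧ 0 < t.2.1 ∧ 0 < t.2.2 ∧ t.1 * t.2.1 * t.2.2 = n}).ncard

/-- `h(n) = ∑_{d³ ∣ n} μ(d) τ₂(n/d³)`, summed over positive `d` with `d³ ∣ n`. -/
noncomputable def moebiusTau2Sum (n : ℕ) : ℤ :=
  ∑ d ∈ n.divisors.filter (fun d => d ^ 3 ∣ n),
    ArithmeticFunction.moebius d * (tau2 (n / d ^ 3) : ℤ)

/-- `T = ζ * ζ * ζ`. -/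
def Tfun : ArithmeticFunction ℕ := ζ * (ζ * ζ)

lemma zeta_sq_apply (m : ℕ) : (ζ * ζ : ArithmeticFunction ℕ) m = m.divisors.card := by
  rw [zeta_mul_apply, Finset.card_eq_sum_ones]
  refine Finset.sum_congr rfl fun i hi => ?_
  have : i ≠ 0 := (Nat.pos_of_mem_divisors hi).ne'
  simp [this]

lemma zeta_sq_apply' (m : ℕ) :
    (ζ * ζ : ArithmeticFunction ℕ) m = m.divisorsAntidiagonal.card := by
  rw [mul_apply, Finset.card_eq_sum_ones]
  refine Finset.sum_congr rfl fun p hp => ?_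
  obtain ⟨h, hn⟩ := Nat.mem_divisorsAntidiagonal.mp hp
  have h1 : p.1 ≠ 0 := by rintro h1; rw [h1, zero_mul] at h; exact hn h.symm
  have h2 : p.2 ≠ 0 := by rintro h2; rw [h2, mul_zero] at h; exact hn h.symm
  simp [h1, h2]

lemma tau2_eq (n : ℕ) (hn : n ≠ 0) : tau2 n = Tfun n := by
  classical
  have hset : {t : ℕ × ℕ × ℕ | 0 < t.1 ∧ 0 < t.2.1 ∧ 0 < t.2.2 ∧ t.1 * t.2.1 * t.2.2 = n}
      = ↑(n.divisors.biUnion fun d =>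
          ((n / d).divisorsAntidiagonal.image fun p => (d, p.1, p.2))) := by
    ext ⟨a, b, c⟩
    simp only [Set.mem_setOf_eq, Finset.coe_biUnion, Set.mem_iUnion, Finset.mem_coe,
      Finset.mem_image, Nat.mem_divisors, Nat.mem_divisorsAntidiagonal, Prod.mk.injEq]
    constructor
    · rintro ⟨ha, hb, hc, habc⟩
      have habc' : a * (b * c) = n := by rw [← habc]; ring
      have hdiv : n / a = b * c := by rw [← habc', Nat.mul_div_cancel_left _ ha]
      exact ⟨a, ⟨⟨b * c, habc'.symm⟩, hn⟩, (b, c),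
        ⟨hdiv.symm, by rw [hdiv]; positivity⟩, rfl, rfl, rfl⟩
    · rintro ⟨d, ⟨hd, -⟩, ⟨p, q⟩, ⟨hpq, hne⟩, rfl, rfl, rfl⟩
      have hd0 : 0 < d := Nat.pos_of_dvd_of_pos hd (Nat.pos_of_ne_zero hn)
      have hp0 : 0 < p := by
        rcases Nat.eq_zero_or_pos p with h | h
        · exfalso; rw [h, zero_mul] at hpq; exact hne hpq.symm
        · exact h
      have hq0 : 0 < q := by
        rcases Nat.eq_zero_or_pos q with h | h
        · exfalso; rw [h, mul_zero] at hpq; exact hne hpq.symm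
        · exact h
      refine ⟨hd0, hp0, hq0, ?_⟩
      rw [mul_assoc, hpq, Nat.mul_div_cancel' hd]
  have hdisj : (↑n.divisors : Set ℕ).PairwiseDisjoint
      fun d => ((n / d).divisorsAntidiagonal.image fun p => (d, p.1, p.2)) := by
    intro x hx y hy hxy
    simp only [Finset.disjoint_left]
    rintro t htx hty
    obtain ⟨p, -, rfl⟩ := Finset.mem_image.mp htx
    obtain ⟨q, -, hq⟩ := Finset.mem_image.mp hty
    exact hxy (congrArg Prod.fst hq).symm
  rw [tau2, hset, Set.ncard_coe_finset, Finset.card_biUnion hdisj]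
  have : ∀ d ∈ n.divisors,
      ((n / d).divisorsAntidiagonal.image fun p => (d, p.1, p.2)).card
        = (ζ * ζ : ArithmeticFunction ℕ) (n / d) := by
    intro d _
    rw [Finset.card_image_of_injective _ (fun p q h => ?_), zeta_sq_apply']
    have h1 := congrArg (Prod.fst ∘ Prod.snd) h
    have h2 := congrArg (Prod.snd ∘ Prod.snd) h
    exact Prod.ext h1 h2
  rw [Finset.sum_congr rfl this, Nat.sum_div_divisors n ((ζ * ζ : ArithmeticFunction ℕ) ·)]
  rw [Tfun, zeta_mul_apply]

lemma Tfun_prime_pow {p : ℕ} (hp : p.Prime) (k : ℕ) :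
    2 * Tfun (p ^ k) = (k + 1) * (k + 2) := by
  rw [Tfun, zeta_mul_apply, Nat.sum_divisors_prime_pow hp]
  have h1 : ∀ i, (ζ * ζ : ArithmeticFunction ℕ) (p ^ i) = i + 1 := by
    intro i
    rw [zeta_sq_apply, Nat.divisors_prime_pow hp, Finset.card_map, Finset.card_range]
  rw [Finset.sum_congr rfl fun i _ => h1 i]
  induction k with
  | zero => simp
  | succ m ih => rw [Finset.sum_range_succ, Nat.mul_add, ih]; ring

/-- `M n = μ d` if `n = d³`, else `0`. -/
def Mfun : ArithmeticFunction ℤ :=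
  ⟨fun x => ∑ d ∈ x.divisors, if d ^ 3 = x then μ d else 0, by simp⟩

lemma Mfun_apply (x : ℕ) :
    Mfun x = ∑ d ∈ x.divisors, if d ^ 3 = x then μ d else 0 := rfl

lemma cube_inj : Function.Injective (fun a : ℕ => a ^ 3) :=
  Nat.pow_left_injective (by norm_num)

lemma Mfun_cube (d : ℕ) (hd : d ≠ 0) : Mfun (d ^ 3) = μ d := by
  rw [Mfun_apply]
  have : ∀ e ∈ (d ^ 3).divisors, (if e ^ 3 = d ^ 3 then (μ e : ℤ) else 0)
      = if e = d then μ e else 0 := by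
    intro e _
    congr 1
    simp only [eq_iff_iff]
    exact ⟨fun h => cube_inj h, fun h => by rw [h]⟩
  rw [Finset.sum_congr rfl this, Finset.sum_ite_eq' _ d (fun e => (μ e : ℤ)), if_pos]
  exact Nat.mem_divisors.mpr ⟨dvd_pow_self d (by norm_num), pow_ne_zero 3 hd⟩

lemma Mfun_noncube (x : ℕ) (h : ¬ ∃ d, d ^ 3 = x) : Mfun x = 0 := by
  rw [Mfun_apply]
  refine Finset.sum_eq_zero fun e _ => ?_
  rw [if_neg fun he => h ⟨e, he⟩]

lemma Mfun_mult : Mfun.IsMultiplicative := by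
  constructor
  · rw [Mfun_apply]; simp
  · intro m n hmn
    rcases Nat.eq_zero_or_pos m with hm0 | hm0
    · subst hm0
      have : n = 1 := by simpa using hmn
      subst this; simp [Mfun_apply]
    rcases Nat.eq_zero_or_pos n with hn0 | hn0
    · subst hn0
      have : m = 1 := by simpa using hmn
      subst this; simp [Mfun_apply]
    by_cases hm : ∃ a, a ^ 3 = m
    · by_cases hn : ∃ b, b ^ 3 = n
      · obtain ⟨a, rfl⟩ := hm
        obtain ⟨b, rfl⟩ := hn
        have ha : a ≠ 0 := by rintro rfl; simp at hm0
        have hb : b ≠ 0 := by rintro rfl; simp at hn0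
        have hab : Nat.Coprime a b := by
          have := hmn
          rwa [Nat.coprime_pow_left_iff (by norm_num),
            Nat.coprime_pow_right_iff (by norm_num)] at this
        rw [← mul_pow, Mfun_cube _ (mul_ne_zero ha hb), Mfun_cube _ ha, Mfun_cube _ hb]
        exact isMultiplicative_moebius.map_mul_of_coprime hab
      · have h1 : Mfun n = 0 := Mfun_noncube n hn
        have h2 : ¬ ∃ d, d ^ 3 = m * n := by
          rintro ⟨d, hd⟩
          have hu : IsUnit (gcd n m) := Nat.isUnit_iff.mpr hmn.symm
          have hmuln : n * m = d ^ 3 := by rw [mul_comm]; exact hd.symm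
          obtain ⟨b, hb⟩ := exists_eq_pow_of_mul_eq_pow hu hmuln
          exact hn ⟨b, hb.symm⟩
        rw [Mfun_noncube _ h2, h1, mul_zero]
    · have h1 : Mfun m = 0 := Mfun_noncube m hm
      have h2 : ¬ ∃ d, d ^ 3 = m * n := by
        rintro ⟨d, hd⟩
        have hu : IsUnit (gcd m n) := Nat.isUnit_iff.mpr hmn
        have hmuln : m * n = d ^ 3 := hd.symm
        obtain ⟨a, ha⟩ := exists_eq_pow_of_mul_eq_pow hu hmuln
        exact hm ⟨a, ha.symm⟩
      rw [Mfun_noncube _ h2, h1, zero_mul]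

/-- The bundled `h`. -/
def Hfun : ArithmeticFunction ℤ := Mfun * ↑Tfun

lemma Hfun_mult : Hfun.IsMultiplicative :=
  Mfun_mult.mul ((isMultiplicative_zeta.mul (isMultiplicative_zeta.mul isMultiplicative_zeta)).natCast)

lemma moebiusTau2Sum_eq (n : ℕ) (hn : n ≠ 0) : moebiusTau2Sum n = Hfun n := by
  classical
  rw [Hfun, mul_apply,
    Nat.sum_divisorsAntidiagonal (fun x y => Mfun x * (↑Tfun : ArithmeticFunction ℤ) y)]
  rw [moebiusTau2Sum]
  have step1 : ∑ e ∈ n.divisors.filter (fun d => d ^ 3 ∣ n), (μ e : ℤ) * (tau2 (n / e ^ 3) : ℤ)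
      = ∑ d ∈ n.divisors.filter (fun d => ∃ e, e ^ 3 = d),
          Mfun d * (↑Tfun : ArithmeticFunction ℤ) (n / d) := by
    refine Finset.sum_bij (fun e _ => e ^ 3) ?_ ?_ ?_ ?_
    · intro e he
      obtain ⟨he1, he2⟩ := Finset.mem_filter.mp he
      exact Finset.mem_filter.mpr ⟨Nat.mem_divisors.mpr ⟨he2, hn⟩, e, rfl⟩
    · intro a ha b hb h
      exact cube_inj h
    · intro d hd
      obtain ⟨hd1, e, rfl⟩ := Finset.mem_filter.mp hd
      have hdvd : e ^ 3 ∣ n := (Nat.mem_divisors.mp hd1).1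
      have hedvd : e ∣ n := dvd_trans (dvd_pow_self e (by norm_num)) hdvd
      exact ⟨e, Finset.mem_filter.mpr ⟨Nat.mem_divisors.mpr ⟨hedvd, hn⟩, hdvd⟩, rfl⟩
    · intro e he
      obtain ⟨he1, he2⟩ := Finset.mem_filter.mp he
      have he0 : e ≠ 0 := (Nat.pos_of_mem_divisors he1).ne'
      have hq0 : n / e ^ 3 ≠ 0 :=
        (Nat.div_pos (Nat.le_of_dvd (Nat.pos_of_ne_zero hn) he2)
          (Nat.pos_of_ne_zero (pow_ne_zero 3 he0))).ne'
      rw [Mfun_cube e he0, natCoe_apply, ← tau2_eq _ hq0]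
  rw [step1]
  refine Finset.sum_filter_of_ne fun d hd hne => ?_
  by_contra h
  rw [Mfun_noncube d h, zero_mul] at hne
  exact hne rfl

lemma tau2_prime_pow {p : ℕ} (hp : p.Prime) (k : ℕ) :
    2 * (tau2 (p ^ k) : ℤ) = ((k : ℤ) + 1) * ((k : ℤ) + 2) := by
  have h := Tfun_prime_pow hp k
  rw [tau2_eq _ (pow_ne_zero k hp.pos.ne')]
  exact_mod_cast congrArg (fun x : ℕ => (x : ℤ)) h

lemma moebiusTau2Sum_prime_pow {p k : ℕ} (hp : p.Prime) (hk : 1 ≤ k) :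
    moebiusTau2Sum (p ^ k) = 3 * (k : ℤ) := by
  classical
  have hpk0 : p ^ k ≠ 0 := pow_ne_zero _ hp.pos.ne'
  rw [moebiusTau2Sum, Finset.sum_filter, Nat.sum_divisors_prime_pow hp,
    Finset.range_eq_Ico, ← Finset.sum_Ico_consecutive _ (by omega : 0 ≤ 2) (by omega : 2 ≤ k + 1)]
  have h2 : ∑ i ∈ Finset.Ico 2 (k + 1),
      (if (p ^ i) ^ 3 ∣ p ^ k then (μ (p ^ i) : ℤ) * (tau2 (p ^ k / (p ^ i) ^ 3) : ℤ) else 0) = 0 := by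
    refine Finset.sum_eq_zero fun i hi => ?_
    have hi2 : 2 ≤ i := (Finset.mem_Ico.mp hi).1
    have hmu : μ (p ^ i) = 0 := by
      rw [moebius_apply_prime_pow hp (by omega)]
      simp [show i ≠ 1 by omega]
    simp [hmu]
  rw [h2, add_zero]
  have hIco : Finset.Ico 0 2 = ({0, 1} : Finset ℕ) := rfl
  rw [hIco, Finset.sum_pair (by norm_num : (0 : ℕ) ≠ 1)]
  have hg0 : (if (p ^ 0) ^ 3 ∣ p ^ k then (μ (p ^ 0) : ℤ) * (tau2 (p ^ k / (p ^ 0) ^ 3) : ℤ) else 0)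
      = (tau2 (p ^ k) : ℤ) := by
    simp
  rw [hg0, pow_one]
  by_cases h3 : 3 ≤ k
  · rw [if_pos ((Nat.pow_dvd_pow_iff_le_right hp.one_lt).mpr h3), moebius_apply_prime hp,
      Nat.pow_div h3 hp.pos]
    have A := tau2_prime_pow hp k
    have B := tau2_prime_pow hp (k - 3)
    have hc : ((k - 3 : ℕ) : ℤ) = (k : ℤ) - 3 := by
      push_cast [h3]; ring
    rw [hc] at B
    -- push_cast
    nlinarith [A, B]
  · rw [if_neg (fun hdvd => h3 ((Nat.pow_dvd_pow_iff_le_right hp.one_lt).mp hdvd)), add_zero]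
    have A := tau2_prime_pow hp k
    interval_cases k <;> push_cast at A ⊢ <;> omega

/-- For `n ≥ 2`: if `n = p^k` is a prime power then `h(n) = 3k`, and otherwise `9 ∣ h(n)`. -/
theorem moebiusTau2Sum_prime_power_or_not (n : ℕ) (hn : 2 ≤ n) :
    (∀ p k : ℕ, p.Prime → 1 ≤ k → n = p ^ k → moebiusTau2Sum n = 3 * (k : ℤ)) ∧
    (¬ (∃ p k : ℕ, p.Prime ∧ 1 ≤ k ∧ n = p ^ k) → (9 : ℤ) ∣ moebiusTau2Sum n) := by
  constructor
  · rintro p k hp hk rfl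
    exact moebiusTau2Sum_prime_pow hp hk
  · intro hnp
    have hn0 : n ≠ 0 := by omega
    have hnotpp : ¬ IsPrimePow n := by
      rintro ⟨p, k, hp, hk, rfl⟩
      exact hnp ⟨p, k, Nat.prime_iff.mpr hp, hk, rfl⟩
    have hcard : 2 ≤ n.primeFactors.card := by
      have h1 : n.primeFactors.Nonempty := Nat.nonempty_primeFactors.mpr (by omega)
      have h2 : n.primeFactors.card ≠ 1 := fun h =>
        hnotpp (isPrimePow_iff_card_primeFactors_eq_one.mpr h)
      have := Finset.card_pos.mpr h1
      omega
    have key : ∀ r ∈ n.primeFactors, ∃ a : ℤ, Hfun (r ^ n.factorization r) = 3 * a := by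
      intro r hr
      have hrp : r.Prime := Nat.prime_of_mem_primeFactors hr
      have hk : 1 ≤ n.factorization r := by
        have := Nat.Prime.factorization_pos_of_dvd hrp hn0 (Nat.dvd_of_mem_primeFactors hr)
        omega
      rw [← moebiusTau2Sum_eq _ (pow_ne_zero _ hrp.pos.ne'),
        moebiusTau2Sum_prime_pow hrp hk]
      exact ⟨_, rfl⟩
    rw [moebiusTau2Sum_eq n hn0,
      ArithmeticFunction.IsMultiplicative.multiplicative_factorization Hfun Hfun_mult hn0,
      Finsupp.prod]
    obtain ⟨p, hp, q, hq, hpq⟩ := Finset.one_lt_card.mp hcard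
    have hsupp : (n.factorization).support = n.primeFactors := Nat.support_factorization n
    rw [hsupp]
    have hq' : q ∈ n.primeFactors.erase p := Finset.mem_erase.mpr ⟨fun h => hpq h.symm, hq⟩
    rw [← Finset.mul_prod_erase _ _ hp, ← Finset.mul_prod_erase _ _ hq']
    obtain ⟨a, ha⟩ := key p hp
    obtain ⟨b, hb⟩ := key q hq
    exact ⟨a * (b * ∏ x ∈ (n.primeFactors.erase p).erase q,
      Hfun (x ^ n.factorization x)), by rw [ha, hb]; ring⟩
end

section
/- There exists an absolute constant C > 0 such that for every real x ≥ 2, the set {n ∈ ℕ : 1 ≤ n ≤ √x} can be partitioned into at most C·x^{0.49} arithmetic progressions, such that for each progression P in the partition there exist rational numbers u, v with ⌊x/n⌋ = u·n + v for all n ∈ P. -/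
open Finset

def Good (x : ℝ) (s : Finset ℕ) (Ps : Finset (Finset ℕ)) : Prop :=
  (∀ P ∈ Ps, ∃ n₀ q L : ℕ, 1 ≤ n₀ ∧ 1 ≤ q ∧
      P = (Finset.range (L + 1)).image (fun l => n₀ + l * q)) ∧
  (∀ P ∈ Ps, ∀ P' ∈ Ps, P ≠ P' → Disjoint P P') ∧
  Ps.biUnion id = s ∧
  (∀ P ∈ Ps, ∃ u v : ℚ, ∀ n ∈ P, (⌊x / (n : ℝ)⌋ : ℚ) = u * (n : ℚ) + v)

lemma good_union {x : ℝ} {s t : Finset ℕ} {Ps Pt : Finset (Finset ℕ)}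
    (hs : Good x s Ps) (ht : Good x t Pt) (hst : Disjoint s t) :
    Good x (s ∪ t) (Ps ∪ Pt) := by
  obtain ⟨h1, h2, h3, h4⟩ := hs
  obtain ⟨g1, g2, g3, g4⟩ := ht
  refine ⟨?_, ?_, ?_, ?_⟩
  · intro P hP; rcases mem_union.1 hP with h | h
    · exact h1 P h
    · exact g1 P h
  · intro P hP P' hP' hne
    have key : ∀ R ∈ Ps, ∀ R' ∈ Pt, Disjoint R R' := by
      intro R hR R' hR'
      have hRs : R ⊆ s := h3 ▸ subset_biUnion_of_mem id hR
      have hRt : R' ⊆ t := g3 ▸ subset_biUnion_of_mem id hR'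
      exact (hst.mono hRs hRt)
    rcases mem_union.1 hP with h | h <;> rcases mem_union.1 hP' with h' | h'
    · exact h2 P h P' h' hne
    · exact key P h P' h'
    · exact (key P' h' P h).symm
    · exact g2 P h P' h' hne
  · ext n
    simp only [mem_biUnion, mem_union, id]
    constructor
    · rintro ⟨Q, hQ, hn⟩
      rcases hQ with h | h
      · exact Or.inl (h3 ▸ mem_biUnion.2 ⟨Q, h, hn⟩)
      · exact Or.inr (g3 ▸ mem_biUnion.2 ⟨Q, h, hn⟩)
    · rintro (h | h)
      · rw [← h3] at h; rcases mem_biUnion.1 h with ⟨Q, hQ, hn⟩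
        exact ⟨Q, Or.inl hQ, hn⟩
      · rw [← g3] at h; rcases mem_biUnion.1 h with ⟨Q, hQ, hn⟩
        exact ⟨Q, Or.inr hQ, hn⟩
  · intro P hP; rcases mem_union.1 hP with h | h
    · exact h4 P h
    · exact g4 P h

lemma good_union_card {Ps Pt : Finset (Finset ℕ)} :
    ((Ps ∪ Pt).card : ℝ) ≤ (Ps.card : ℝ) + Pt.card := by
  exact_mod_cast Nat.cast_le.mpr (card_union_le Ps Pt)

lemma good_biUnion {x : ℝ} {J : Finset ℕ} {s : ℕ → Finset ℕ} {P : ℕ → Finset (Finset ℕ)}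
    (hdisj : ∀ i ∈ J, ∀ i' ∈ J, i ≠ i' → Disjoint (s i) (s i'))
    (hgood : ∀ i ∈ J, Good x (s i) (P i)) :
    Good x (J.biUnion s) (J.biUnion P) := by
  refine ⟨?_, ?_, ?_, ?_⟩
  · intro Q hQ; rcases mem_biUnion.1 hQ with ⟨i, hi, h⟩
    exact (hgood i hi).1 Q h
  · intro Q hQ Q' hQ' hne
    rcases mem_biUnion.1 hQ with ⟨i, hi, h⟩
    rcases mem_biUnion.1 hQ' with ⟨i', hi', h'⟩
    by_cases hii : i = i'
    · exact (hgood i hi).2.1 Q h Q' (hii ▸ h') hne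
    · have hQs : Q ⊆ s i := (hgood i hi).2.2.1 ▸ subset_biUnion_of_mem id h
      have hQs' : Q' ⊆ s i' := (hgood i' hi').2.2.1 ▸ subset_biUnion_of_mem id h'
      exact (hdisj i hi i' hi' hii).mono hQs hQs'
  · ext n; simp only [mem_biUnion, id]
    constructor
    · rintro ⟨Q, hQ, hn⟩
      rcases hQ with ⟨i, hi, h⟩
      have : n ∈ s i := (hgood i hi).2.2.1 ▸ mem_biUnion.2 ⟨Q, h, hn⟩
      exact ⟨i, hi, this⟩
    · rintro ⟨i, hi, hn⟩
      have := (hgood i hi).2.2.1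
      rw [← this] at hn
      rcases mem_biUnion.1 hn with ⟨Q, hQ, h⟩
      exact ⟨Q, ⟨i, hi, hQ⟩, h⟩
  · intro Q hQ; rcases mem_biUnion.1 hQ with ⟨i, hi, h⟩
    exact (hgood i hi).2.2.2 Q h

lemma good_singletons (x : ℝ) (a b : ℕ) (ha : 1 ≤ a) :
    Good x (Icc a b) ((Icc a b).image fun n => ({n} : Finset ℕ)) ∧
      ((Icc a b).image fun n => ({n} : Finset ℕ)).card ≤ b + 1 - a := by
  constructor
  · refine ⟨?_, ?_, ?_, ?_⟩
    · intro P hP; rcases mem_image.1 hP with ⟨n, hn, rfl⟩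
      exact ⟨n, 1, 0, le_trans ha (mem_Icc.1 hn).1, le_refl 1, by simp⟩
    · intro P hP P' hP' hne
      rcases mem_image.1 hP with ⟨n, hn, rfl⟩
      rcases mem_image.1 hP' with ⟨n', hn', rfl⟩
      simp only [disjoint_singleton_left, mem_singleton]
      intro h; exact hne (by rw [h])
    · ext n; simp only [mem_biUnion, mem_image, id]
      constructor
      · rintro ⟨Q, ⟨m, hm, rfl⟩, hn⟩; simpa [mem_singleton.1 hn] using hm
      · intro hn; exact ⟨{n}, ⟨n, hn, rfl⟩, mem_singleton_self n⟩
    · intro P hP; rcases mem_image.1 hP with ⟨n, hn, rfl⟩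
      exact ⟨0, (⌊x / (n : ℝ)⌋ : ℚ), by intro m hm; rw [mem_singleton.1 hm]; ring⟩
  · calc ((Icc a b).image fun n => ({n} : Finset ℕ)).card ≤ (Icc a b).card := card_image_le
      _ = b + 1 - a := Nat.card_Icc a b

/-- number of changes of `w` before `l` -/
def cnt (w : ℕ → ℤ) (l : ℕ) : ℕ := ((range l).filter (fun j => w j ≠ w (j+1))).card

lemma cnt_mono (w : ℕ → ℤ) : Monotone (cnt w) := fun l l' h =>
  card_le_card (filter_subset_filter _ (range_subset_range.2 h))

lemma cnt_succ (w : ℕ → ℤ) (l : ℕ) :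
    cnt w (l+1) = cnt w l + (if w l ≠ w (l+1) then 1 else 0) := by
  unfold cnt
  rw [range_add_one, filter_insert]
  split
  · rw [card_insert_of_notMem (fun h => notMem_range_self (mem_filter.1 h).1)]
  · simp

lemma cnt_eq_const {w : ℕ → ℤ} {l l' : ℕ} (h : l ≤ l') (hc : cnt w l' ≤ cnt w l) :
    w l = w l' := by
  induction l', h using Nat.le_induction with
  | base => rfl
  | succ l' hll ih =>
    have h1 : cnt w l ≤ cnt w l' := cnt_mono w hll
    have h2 : cnt w l' ≤ cnt w (l'+1) := cnt_mono w (Nat.le_succ _)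
    have h3 := cnt_succ w l'
    have hww : w l' = w (l'+1) := by
      by_contra hne
      simp [hne] at h3
      omega
    rw [ih (by omega), hww]

lemma filter_eq_range_of_lower {L : ℕ} (p : ℕ → Prop) [DecidablePred p]
    (h : ∀ l l', l ≤ l' → l' < L → p l' → p l) :
    (range L).filter p = range ((range L).filter p).card := by
  set S := (range L).filter p with hS
  have hsub : S ⊆ range S.card := by
    intro m hm
    rw [mem_range]
    by_contra hc
    push_neg at hc
    have hmL : m < L := mem_range.1 (mem_filter.1 hm).1
    have hsub2 : range (m+1) ⊆ S := by
      intro j hj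
      rw [mem_range] at hj
      exact mem_filter.2 ⟨mem_range.2 (by omega), h j m (by omega) hmL (mem_filter.1 hm).2⟩
    have := card_le_card hsub2
    rw [card_range] at this
    omega
  exact eq_of_subset_of_card_le hsub (by rw [card_range])

lemma good_class (x : ℝ) (hx : 0 ≤ x) (n₀ q L : ℕ) (hn₀ : 1 ≤ n₀) (hq : 1 ≤ q)
    (a : ℤ) (ε : ℝ)
    (hε : ∀ l, l < L → |(a : ℝ) - x * q /
        (((n₀ + l * q : ℕ) : ℝ) * ((n₀ + (l+1) * q : ℕ) : ℝ))| ≤ ε) :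
    ∃ Ps : Finset (Finset ℕ),
      Good x ((range (L + 1)).image (fun l => n₀ + l * q)) Ps ∧
      (Ps.card : ℝ) ≤ 2 * ε * L + 3 := by
  classical
  set nn : ℕ → ℝ := fun l => ((n₀ + l * q : ℕ) : ℝ) with hnn_def
  have hnn_pos : ∀ l, (0:ℝ) < nn l := by
    intro l
    have h : 0 < n₀ + l * q := by omega
    show (0:ℝ) < ((n₀ + l * q : ℕ) : ℝ)
    exact_mod_cast h
  have hnn_mono : ∀ l l', l ≤ l' → nn l ≤ nn l' := by
    intro l l' h
    have h2 : n₀ + l * q ≤ n₀ + l' * q := Nat.add_le_add_left (Nat.mul_le_mul_right q h) n₀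
    show ((n₀ + l * q : ℕ) : ℝ) ≤ ((n₀ + l' * q : ℕ) : ℝ)
    exact_mod_cast h2
  set G : ℕ → ℝ := fun l => x / nn l + (a : ℝ) * l with hG_def
  set w : ℕ → ℤ := fun l => ⌊x / nn l⌋ + a * l with hw_def
  have hwG : ∀ l, w l = ⌊G l⌋ := by
    intro l
    have hcast : (a : ℝ) * l = ((a * (l:ℤ) : ℤ) : ℝ) := by push_cast; ring
    rw [hw_def, hG_def]
    simp only
    rw [hcast, Int.floor_add_intCast]
  have hnn_succ : ∀ l, nn (l+1) = nn l + q := by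
    intro l
    simp only [hnn_def]
    push_cast
    ring
  have hdiff : ∀ l, G (l+1) - G l = (a : ℝ) - x * q / (nn l * nn (l+1)) := by
    intro l
    have h0 := hnn_pos l
    have h1 := hnn_pos (l+1)
    have h2 := hnn_succ l
    simp only [hG_def]
    rw [h2]
    push_cast
    field_simp
    ring
  -- the partition pieces
  set piece : ℕ → Finset ℕ := fun k =>
    ((range (L+1)).filter (fun l => cnt w l = k)).image (fun l => n₀ + l * q) with hpiece_def
  set Ps : Finset (Finset ℕ) := ((range (L+1)).image (cnt w)).image piece with hPs_def
  have hfinj : Function.Injective (fun l : ℕ => n₀ + l * q) := by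
    intro l l' h
    simp only at h
    have : l * q = l' * q := by omega
    exact Nat.eq_of_mul_eq_mul_right (by omega) this
  -- structure of each piece
  have hpiece_struct : ∀ k ∈ (range (L+1)).image (cnt w),
      ∃ s e : ℕ, s ≤ e ∧ e ≤ L ∧ cnt w s = k ∧
        ((range (L+1)).filter (fun l => cnt w l = k)) = Icc s e := by
    intro k hk
    rcases mem_image.1 hk with ⟨l₀, hl₀, rfl⟩
    set F := (range (L+1)).filter (fun l => cnt w l = cnt w l₀) with hF
    have hFne : F.Nonempty := ⟨l₀, mem_filter.2 ⟨hl₀, rfl⟩⟩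
    refine ⟨F.min' hFne, F.max' hFne, F.min'_le _ (F.max'_mem hFne), ?_, ?_, ?_⟩
    · have := F.max'_mem hFne
      have := mem_range.1 (mem_filter.1 this).1
      omega
    · exact (mem_filter.1 (F.min'_mem hFne)).2
    · ext m
      simp only [mem_Icc]
      constructor
      · intro hm
        exact ⟨F.min'_le m hm, F.le_max' m hm⟩
      · rintro ⟨h1, h2⟩
        have hsF := F.min'_mem hFne
        have heF := F.max'_mem hFne
        have hcs : cnt w (F.min' hFne) = cnt w l₀ := (mem_filter.1 hsF).2
        have hce : cnt w (F.max' hFne) = cnt w l₀ := (mem_filter.1 heF).2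
        have hm1 := cnt_mono w h1
        have hm2 := cnt_mono w h2
        have heL := mem_range.1 (mem_filter.1 heF).1
        exact mem_filter.2 ⟨mem_range.2 (by omega), by omega⟩
  have hIcc_image : ∀ s e : ℕ, s ≤ e →
      (Icc s e).image (fun l => n₀ + l * q)
        = (range (e - s + 1)).image (fun i => (n₀ + s * q) + i * q) := by
    intro s e hse
    ext n
    simp only [mem_image, mem_Icc, mem_range]
    constructor
    · rintro ⟨m, ⟨h1, h2⟩, rfl⟩
      refine ⟨m - s, by omega, ?_⟩
      have h3 : (m - s) * q = m * q - s * q := Nat.sub_mul m s q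
      have h4 : s * q ≤ m * q := Nat.mul_le_mul_right q h1
      omega
    · rintro ⟨i, hi, rfl⟩
      refine ⟨s + i, ⟨by omega, by omega⟩, ?_⟩
      have : (s + i) * q = s * q + i * q := Nat.add_mul s i q
      omega
  have hgood : Good x ((range (L + 1)).image (fun l => n₀ + l * q)) Ps := by
    refine ⟨?_, ?_, ?_, ?_⟩
    · -- AP form
      intro P hP
      rcases mem_image.1 hP with ⟨k, hk, rfl⟩
      obtain ⟨s, e, hse, heL, hcs, hfib⟩ := hpiece_struct k hk
      refine ⟨n₀ + s * q, q, e - s, by omega, hq, ?_⟩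
      rw [hpiece_def]
      simp only
      rw [hfib, hIcc_image s e hse]
    · -- disjoint
      intro P hP P' hP' hne
      rcases mem_image.1 hP with ⟨k, hk, rfl⟩
      rcases mem_image.1 hP' with ⟨k', hk', rfl⟩
      have hkk : k ≠ k' := fun h => hne (by rw [h])
      rw [hpiece_def]
      simp only
      rw [Finset.disjoint_image hfinj]
      rw [disjoint_left]
      intro m hm hm'
      exact hkk ((mem_filter.1 hm).2.symm.trans (mem_filter.1 hm').2)
    · -- biUnion
      ext n
      simp only [mem_biUnion, id]
      constructor
      · rintro ⟨P, hP, hn⟩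
        rcases mem_image.1 hP with ⟨k, hk, rfl⟩
        exact (image_subset_image (filter_subset _ _)) hn
      · intro hn
        rcases mem_image.1 hn with ⟨l, hl, rfl⟩
        refine ⟨piece (cnt w l), mem_image.2 ⟨cnt w l, mem_image.2 ⟨l, hl, rfl⟩, rfl⟩, ?_⟩
        rw [hpiece_def]
        exact mem_image.2 ⟨l, mem_filter.2 ⟨hl, rfl⟩, rfl⟩
    · -- linear
      intro P hP
      rcases mem_image.1 hP with ⟨k, hk, rfl⟩
      obtain ⟨s, e, hse, heL, hcs, hfib⟩ := hpiece_struct k hk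
      refine ⟨-(a : ℚ)/q, ((w s : ℤ) : ℚ) + (a : ℚ) * n₀ / q, ?_⟩
      intro n hn
      rw [hpiece_def] at hn
      simp only [mem_image] at hn
      rcases hn with ⟨m, hm, rfl⟩
      have hmem := mem_filter.1 hm
      have hsm : s ≤ m := by
        rw [hfib] at hm
        exact (mem_Icc.1 hm).1
      have hwsm : w s = w m := cnt_eq_const hsm (by rw [hmem.2, hcs])
      have hfloor : ⌊x / ((n₀ + m * q : ℕ) : ℝ)⌋ = w s - a * m := by
        show ⌊x / nn m⌋ = w s - a * m
        rw [hwsm]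
        simp only [hw_def]
        ring
      rw [hfloor]
      have hq0 : (q : ℚ) ≠ 0 := by
        have : (0:ℚ) < q := by exact_mod_cast hq
        exact this.ne'
      push_cast
      field_simp
      ring
  refine ⟨Ps, hgood, ?_⟩
  -- cardinality bound
  have hcard1 : Ps.card ≤ cnt w L + 1 := by
    calc Ps.card ≤ ((range (L+1)).image (cnt w)).card := card_image_le
      _ ≤ (range (cnt w L + 1)).card := by
          apply card_le_card
          intro k hk
          rcases mem_image.1 hk with ⟨l, hl, rfl⟩
          rw [mem_range]
          have := cnt_mono w (show l ≤ L by exact Nat.lt_succ_iff.1 (mem_range.1 hl))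
          omega
      _ = cnt w L + 1 := card_range _
  -- now bound cnt w L
  have hε' : ∀ l, l < L → |(a : ℝ) - x * q / (nn l * nn (l+1))| ≤ ε := hε
  clear_value nn G w
  clear hnn_def hG_def hw_def hnn_succ hε
  set p : ℕ → Prop := fun l => G (l+1) < G l with hp_def
  have hlower : ∀ l l', l ≤ l' → l' < L → p l' → p l := by
    intro l l' hll hl'L hpl'
    have h1 := hdiff l
    have h2 := hdiff l'
    have hfrac : x * q / (nn l' * nn (l'+1)) ≤ x * q / (nn l * nn (l+1)) := by
      apply div_le_div_of_nonneg_left (by positivity) (mul_pos (hnn_pos l) (hnn_pos (l+1)))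
      apply mul_le_mul (hnn_mono l l' hll) (hnn_mono (l+1) (l'+1) (by omega))
        (hnn_pos (l+1)).le (hnn_pos l').le
    have hpl2 : G (l'+1) < G l' := hpl'
    show G (l+1) < G l
    linarith [hpl2, h1, h2, hfrac]
  set lst : ℕ := ((range L).filter p).card with hlst_def
  have hfr := filter_eq_range_of_lower p hlower
  have hlstL : lst ≤ L := by
    rw [hlst_def]
    calc ((range L).filter p).card ≤ (range L).card := card_filter_le _ _
      _ = L := card_range L
  have hkey : ∀ l, l < L → (p l ↔ l < lst) := by
    intro l hl
    constructor
    · intro hpl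
      have : l ∈ (range L).filter p := mem_filter.2 ⟨mem_range.2 hl, hpl⟩
      rw [hfr] at this
      exact mem_range.1 this
    · intro hllst
      have : l ∈ range lst := mem_range.2 hllst
      rw [← hfr] at this
      exact (mem_filter.1 this).2
  -- monotonicity of w on the two ranges
  have hwdec : ∀ l, l < lst → w (l+1) ≤ w l := by
    intro l hl
    have hpl : p l := (hkey l (by omega)).2 hl
    rw [hwG, hwG]
    exact Int.floor_le_floor (le_of_lt hpl)
  have hwinc : ∀ l, lst ≤ l → l < L → w l ≤ w (l+1) := by
    intro l h1 h2
    have hnp : ¬ p l := by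
      intro hpl
      have := (hkey l h2).1 hpl
      omega
    rw [hwG, hwG]
    exact Int.floor_le_floor (not_lt.1 hnp)
  by_cases hL : L = 0
  · subst hL
    have : cnt w 0 = 0 := by simp [cnt]
    rw [this] at hcard1
    have : (Ps.card : ℝ) ≤ 1 := by exact_mod_cast hcard1
    norm_num
    linarith
  have hε0 : 0 ≤ ε := le_trans (abs_nonneg _) (hε' 0 (by omega))
  have hGw_le : ∀ l, (w l : ℝ) ≤ G l := fun l => by rw [hwG]; exact Int.floor_le _
  have hGw_gt : ∀ l, G l - 1 < (w l : ℝ) := fun l => by rw [hwG]; exact Int.sub_one_lt_floor _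
  have habs : ∀ l, l < L → G l - G (l+1) ≤ ε ∧ G (l+1) - G l ≤ ε := by
    intro l hl
    have h1 := abs_le.1 (hε' l hl)
    have h2 := hdiff l
    constructor <;> linarith [h1.1, h1.2, h2]
  -- first part
  have hK1 : (((range lst).filter (fun j => w j ≠ w (j+1))).card : ℤ) ≤ w 0 - w lst := by
    have h1 : (((range lst).filter (fun j => w j ≠ w (j+1))).card : ℤ)
        = ∑ l ∈ range lst, (if w l ≠ w (l+1) then (1:ℤ) else 0) := by
      rw [card_filter]
      push_cast
      rfl
    rw [h1, ← Finset.sum_range_sub' w lst]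
    apply Finset.sum_le_sum
    intro l hl
    have hd := hwdec l (mem_range.1 hl)
    split
    · next h => omega
    · omega
  have hK2 : (((Ico lst L).filter (fun j => w j ≠ w (j+1))).card : ℤ) ≤ w L - w lst := by
    have h1 : (((Ico lst L).filter (fun j => w j ≠ w (j+1))).card : ℤ)
        = ∑ l ∈ Ico lst L, (if w l ≠ w (l+1) then (1:ℤ) else 0) := by
      rw [card_filter]
      push_cast
      rfl
    have h2 : ∑ l ∈ Ico lst L, (w (l+1) - w l) = w L - w lst := by
      rw [Finset.sum_Ico_eq_sub _ hlstL, Finset.sum_range_sub w, Finset.sum_range_sub w]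
      ring
    rw [h1, ← h2]
    apply Finset.sum_le_sum
    intro l hl
    have hmem := mem_Ico.1 hl
    have hd := hwinc l hmem.1 hmem.2
    split
    · next h => omega
    · omega
  have hsumG1 : G 0 - G lst ≤ ε * L := by
    have he : G 0 - G lst = ∑ l ∈ range lst, (G l - G (l+1)) := (Finset.sum_range_sub' G lst).symm
    rw [he]
    calc ∑ l ∈ range lst, (G l - G (l+1)) ≤ ∑ _l ∈ range lst, ε := by
          apply sum_le_sum
          intro l hl
          exact (habs l (lt_of_lt_of_le (mem_range.1 hl) hlstL)).1
      _ = (lst : ℝ) * ε := by rw [sum_const, card_range, nsmul_eq_mul]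
      _ ≤ ε * L := by
          rw [mul_comm]
          apply mul_le_mul_of_nonneg_left _ hε0
          exact_mod_cast hlstL
  have hsumG2 : G L - G lst ≤ ε * L := by
    have he : G L - G lst = ∑ l ∈ Ico lst L, (G (l+1) - G l) := by
      rw [Finset.sum_Ico_eq_sub _ hlstL, Finset.sum_range_sub G, Finset.sum_range_sub G]
      ring
    rw [he]
    calc ∑ l ∈ Ico lst L, (G (l+1) - G l) ≤ ∑ _l ∈ Ico lst L, ε := by
          apply sum_le_sum
          intro l hl
          exact (habs l (mem_Ico.1 hl).2).2
      _ = ((L - lst : ℕ) : ℝ) * ε := by rw [sum_const, Nat.card_Ico, nsmul_eq_mul]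
      _ ≤ ε * L := by
          rw [mul_comm]
          apply mul_le_mul_of_nonneg_left _ hε0
          have : L - lst ≤ L := Nat.sub_le L lst
          exact_mod_cast this
  have hrsplit : range L = range lst ∪ Ico lst L := by
    ext m
    simp only [mem_union, mem_range, mem_Ico]
    omega
  have hcnt_split : cnt w L ≤ ((range lst).filter (fun j => w j ≠ w (j+1))).card
      + ((Ico lst L).filter (fun j => w j ≠ w (j+1))).card := by
    unfold cnt
    rw [hrsplit, filter_union]
    exact card_union_le _ _
  -- put everything together
  have hc1R : (((range lst).filter (fun j => w j ≠ w (j+1))).card : ℝ) ≤ ε * L + 1 := by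
    have h1 : ((((range lst).filter (fun j => w j ≠ w (j+1))).card : ℤ) : ℝ) ≤ ((w 0 - w lst : ℤ) : ℝ) := by
      exact_mod_cast hK1
    push_cast at h1
    have := hGw_le 0
    have := hGw_gt lst
    push_cast
    linarith [hsumG1]
  have hc2R : (((Ico lst L).filter (fun j => w j ≠ w (j+1))).card : ℝ) ≤ ε * L + 1 := by
    have h1 : ((((Ico lst L).filter (fun j => w j ≠ w (j+1))).card : ℤ) : ℝ) ≤ ((w L - w lst : ℤ) : ℝ) := by
      exact_mod_cast hK2
    push_cast at h1
    have := hGw_le L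
    have := hGw_gt lst
    push_cast
    linarith [hsumG2]
  have hfin : (cnt w L : ℝ) ≤ 2 * ε * L + 2 := by
    have h1 : (cnt w L : ℝ) ≤ (((range lst).filter (fun j => w j ≠ w (j+1))).card : ℝ)
        + (((Ico lst L).filter (fun j => w j ≠ w (j+1))).card : ℝ) := by
      exact_mod_cast hcnt_split
    linarith
  have h2 : (Ps.card : ℝ) ≤ (cnt w L : ℝ) + 1 := by exact_mod_cast hcard1
  linarith

lemma good_block (x : ℝ) (hx : 0 ≤ x) (M H' q : ℕ) (hq : 1 ≤ q)
    (a : ℤ) (ε : ℝ) (hε0 : 0 ≤ ε)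
    (hε : ∀ n : ℕ, M + 1 ≤ n → n + q ≤ M + H' →
      |(a : ℝ) - x * q / ((n : ℝ) * ((n + q : ℕ) : ℝ))| ≤ ε) :
    ∃ Ps, Good x (Icc (M+1) (M+H')) Ps ∧ (Ps.card : ℝ) ≤ 2 * ε * H' + 3 * q := by
  classical
  by_cases hH' : H' < q
  · -- use singletons
    obtain ⟨hgood, hcard⟩ := good_singletons x (M+1) (M+H') (by omega)
    refine ⟨_, hgood, ?_⟩
    have h1 : (M + H' + 1 - (M+1)) = H' := by omega
    rw [h1] at hcard
    have h2 : (((Icc (M+1) (M+H')).image fun n => ({n} : Finset ℕ)).card : ℝ) ≤ H' := by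
      exact_mod_cast hcard
    have h3 : (H' : ℝ) ≤ 3 * q := by
      have : (H' : ℝ) ≤ q := by exact_mod_cast le_of_lt hH'
      have hq1 : (0:ℝ) ≤ q := by positivity
      linarith
    nlinarith [mul_nonneg (mul_nonneg (by norm_num : (0:ℝ) ≤ 2) hε0) (Nat.cast_nonneg H')]
  push_neg at hH'
  set L : ℕ → ℕ := fun r => (H' - 1 - r) / q with hLdef
  set cls : ℕ → Finset ℕ := fun r => (range (L r + 1)).image (fun l => (M + 1 + r) + l * q)
    with hclsdef
  have hclass : ∀ r : ℕ, ∃ Ps, r < q →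
      (Good x (cls r) Ps ∧ (Ps.card : ℝ) ≤ 2 * ε * (L r) + 3) := by
    intro r
    by_cases hr : r < q
    · obtain ⟨Ps, h1, h2⟩ := good_class x hx (M+1+r) q (L r) (by omega) hq a ε (by
        intro l hl
        have hn1 : M + 1 ≤ M+1+r + l*q := by omega
        have hn2 : (M+1+r+l*q) + q ≤ M + H' := by
          have h3 : (l+1) * q ≤ L r * q := Nat.mul_le_mul_right q (by omega)
          have h4 : L r * q ≤ H' - 1 - r := Nat.div_mul_le_self _ _
          have h5 : (l+1)*q = l*q + q := by ring
          omega
        have h6 := hε (M+1+r+l*q) hn1 hn2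
        have hcast : (M+1+r+l*q) + q = M+1+r+(l+1)*q := by ring
        rw [hcast] at h6
        exact h6)
      exact ⟨Ps, fun _ => ⟨h1, h2⟩⟩
    · exact ⟨∅, fun h => absurd h hr⟩
  choose PS hPS using hclass
  have hdisj : ∀ r ∈ range q, ∀ r' ∈ range q, r ≠ r' → Disjoint (cls r) (cls r') := by
    intro r hr r' hr' hne
    rw [disjoint_left]
    intro n hn hn'
    rw [hclsdef] at hn hn'
    simp only [mem_image, mem_range] at hn hn'
    obtain ⟨l, _, rfl⟩ := hn
    obtain ⟨l', _, heq⟩ := hn'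
    apply hne
    have e1 : (r + l * q) % q = r % q := Nat.add_mul_mod_self_right r l q
    have e2 : (r' + l' * q) % q = r' % q := Nat.add_mul_mod_self_right r' l' q
    have e3 : r + l * q = r' + l' * q := by omega
    rw [e3] at e1
    rw [Nat.mod_eq_of_lt (mem_range.1 hr), Nat.mod_eq_of_lt (mem_range.1 hr')] at *
    omega
  have hgoods : ∀ r ∈ range q, Good x (cls r) (PS r) :=
    fun r hr => (hPS r (mem_range.1 hr)).1
  have hcover : (range q).biUnion cls = Icc (M+1) (M+H') := by
    ext n
    simp only [mem_biUnion, mem_range, hclsdef, mem_image, mem_Icc]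
    constructor
    · rintro ⟨r, hr, l, hl, rfl⟩
      have h3 : l * q ≤ L r * q := Nat.mul_le_mul_right q (by omega)
      have h4 : L r * q ≤ H' - 1 - r := Nat.div_mul_le_self _ _
      constructor <;> omega
    · rintro ⟨h1, h2⟩
      set m := n - (M+1) with hm
      refine ⟨m % q, Nat.mod_lt _ (by omega), m / q, ?_, ?_⟩
      · rw [Nat.lt_succ_iff, hLdef]
        rw [Nat.le_div_iff_mul_le (by omega)]
        have hlq : m / q * q + m % q = m := by
          rw [mul_comm]
          exact Nat.div_add_mod m q
        have hmq : m % q ≤ m := Nat.mod_le m q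
        generalize hB : m / q * q = B at hlq ⊢
        omega
      · have hlq : m / q * q + m % q = m := by
          rw [mul_comm]
          exact Nat.div_add_mod m q
        generalize hB : m / q * q = B at hlq ⊢
        omega
  refine ⟨(range q).biUnion PS, ?_, ?_⟩
  · have := good_biUnion hdisj hgoods
    rwa [hcover] at this
  · have h1 : (((range q).biUnion PS).card : ℝ) ≤ ∑ r ∈ range q, ((PS r).card : ℝ) := by
      have := card_biUnion_le (s := range q) (t := PS)
      exact_mod_cast this
    have h2 : ∑ r ∈ range q, ((PS r).card : ℝ) ≤ ∑ r ∈ range q, (2 * ε * (L r) + 3) :=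
      sum_le_sum (fun r hr => (hPS r (mem_range.1 hr)).2)
    have hsumL : ∑ r ∈ range q, L r ≤ H' := by
      calc ∑ r ∈ range q, L r ≤ ∑ _r ∈ range q, (H' - 1)/q :=
            sum_le_sum (fun r _ => Nat.div_le_div_right (by omega))
        _ = q * ((H'-1)/q) := by rw [sum_const, card_range, smul_eq_mul]
        _ ≤ H' := by
            have := Nat.mul_div_le (H'-1) q
            omega
    have h3 : ∑ r ∈ range q, (2 * ε * (L r) + 3 : ℝ) = 2 * ε * ((∑ r ∈ range q, L r : ℕ) : ℝ) + 3 * q := by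
      rw [sum_add_distrib, ← mul_sum, sum_const, card_range, Nat.cast_sum]
      push_cast
      ring
    have h4 : (((∑ r ∈ range q, L r : ℕ)) : ℝ) ≤ H' := by exact_mod_cast hsumL
    have h5 : 2 * ε * ((∑ r ∈ range q, L r : ℕ) : ℝ) ≤ 2 * ε * H' :=
      mul_le_mul_of_nonneg_left h4 (by linarith)
    linarith

set_option maxHeartbeats 2000000 in
lemma good_block_dirichlet (x : ℝ) (hx : 0 ≤ x) (M H' H Q : ℕ)
    (hQ : 1 ≤ Q) (hH'H : H' ≤ H) (hHM : H ≤ M) (hM : 1 ≤ M) :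
    ∃ Ps, Good x (Icc (M+1) (M+H')) Ps ∧
      (Ps.card : ℝ) ≤ 2 * (1/((Q:ℝ)+1) + 4 * x * Q * H / (M:ℝ)^3) * H' + 3 * Q := by
  set ξ : ℝ := x / ((M:ℝ)+1)^2 with hξdef
  obtain ⟨j, k, hk0, hkQ, hjk⟩ := Real.exists_int_int_abs_mul_sub_le ξ (show 0 < Q by omega)
  set q : ℕ := k.toNat with hqdef
  have hqk : (q : ℤ) = k := Int.toNat_of_nonneg hk0.le
  have hq1 : 1 ≤ q := by omega
  have hqQ : q ≤ Q := by
    have : (q : ℤ) ≤ Q := hqk ▸ hkQ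
    exact_mod_cast this
  have hqkR : (q : ℝ) = (k : ℝ) := by exact_mod_cast hqk
  have hMpos : (0:ℝ) < M := by exact_mod_cast hM
  set ε : ℝ := 1/((Q:ℝ)+1) + 4 * x * q * H / (M:ℝ)^3 with hεdef
  have hε0 : 0 ≤ ε := by positivity
  have hε : ∀ n : ℕ, M + 1 ≤ n → n + q ≤ M + H' →
      |(j : ℝ) - x * q / ((n : ℝ) * ((n + q : ℕ) : ℝ))| ≤ ε := by
    intro n h1 h2
    set D : ℝ := (n : ℝ) * ((n + q : ℕ) : ℝ) with hDdef
    have hd1 : ((M:ℝ)+1)^2 ≤ D := by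
      have e1 : (M:ℝ) + 1 ≤ n := by exact_mod_cast h1
      have e2 : (M:ℝ) + 1 ≤ ((n + q : ℕ) : ℝ) := by
        have : M + 1 ≤ n + q := by omega
        exact_mod_cast this
      nlinarith
    have hd2 : D ≤ ((M:ℝ) + H)^2 := by
      have e1 : (n:ℝ) ≤ (M:ℝ) + H := by
        have : n ≤ M + H := by omega
        exact_mod_cast this
      have e2 : ((n + q : ℕ):ℝ) ≤ (M:ℝ) + H := by
        have : n + q ≤ M + H := by omega
        exact_mod_cast this
      have e3 : (0:ℝ) ≤ n := by positivity
      have e4 : (0:ℝ) ≤ ((n+q:ℕ):ℝ) := by positivity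
      nlinarith
    have hDpos : 0 < D := by nlinarith
    have hterm1 : |(j:ℝ) - q * ξ| ≤ 1/((Q:ℝ)+1) := by
      rw [abs_sub_comm, hqkR]
      exact hjk
    have hqξ : (q:ℝ) * ξ = x * q / ((M:ℝ)+1)^2 := by
      rw [hξdef]; ring
    have hterm2 : |(q:ℝ) * ξ - x * q / D| ≤ 4 * x * q * H / (M:ℝ)^3 := by
      have hsub : (q:ℝ) * ξ - x * q / D = x * q * (D - ((M:ℝ)+1)^2) / (((M:ℝ)+1)^2 * D) := by
        rw [hqξ]
        field_simp
      have hnum : D - ((M:ℝ)+1)^2 ≤ 4 * M * H := by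
        have hHM' : (H:ℝ) ≤ M := by exact_mod_cast hHM
        have hH0 : (0:ℝ) ≤ H := by positivity
        nlinarith
      have hden : (M:ℝ)^4 ≤ ((M:ℝ)+1)^2 * D := by
        have e1 : ((M:ℝ)+1)^2 * ((M:ℝ)+1)^2 ≤ ((M:ℝ)+1)^2 * D :=
          mul_le_mul_of_nonneg_left hd1 (by positivity)
        nlinarith [hMpos.le]
      have hnn : (0:ℝ) ≤ x * q := by positivity
      have hfrac : x * q * (D - ((M:ℝ)+1)^2) / (((M:ℝ)+1)^2 * D)
          ≤ x * q * (4 * M * H) / (M:ℝ)^4 :=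
        div_le_div₀ (by positivity) (mul_le_mul_of_nonneg_left hnum hnn)
          (pow_pos hMpos 4) hden
      have heq4 : x * q * (4 * M * H) / (M:ℝ)^4 = 4 * x * q * H / (M:ℝ)^3 := by
        have : (M:ℝ) ≠ 0 := hMpos.ne'
        field_simp
      rw [hsub, abs_of_nonneg (div_nonneg (mul_nonneg hnn (by linarith [hd1])) (by positivity))]
      rw [heq4] at hfrac
      exact hfrac
    calc |(j : ℝ) - x * q / D| = |((j:ℝ) - q * ξ) + ((q:ℝ) * ξ - x * q / D)| := by ring_nf
      _ ≤ |(j:ℝ) - q * ξ| + |(q:ℝ) * ξ - x * q / D| := abs_add_le _ _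
      _ ≤ 1/((Q:ℝ)+1) + 4 * x * q * H / (M:ℝ)^3 := add_le_add hterm1 hterm2
  obtain ⟨Ps, hgood, hcard⟩ := good_block x hx M H' q hq1 j ε hε0 hε
  refine ⟨Ps, hgood, ?_⟩
  have hεε : ε ≤ 1/((Q:ℝ)+1) + 4 * x * Q * H / (M:ℝ)^3 := by
    rw [hεdef]
    have : 4 * x * (q:ℝ) * H / (M:ℝ)^3 ≤ 4 * x * Q * H / (M:ℝ)^3 := by
      have hqQc : (q:ℝ) ≤ (Q:ℝ) := by exact_mod_cast hqQ
      gcongr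
    linarith
  have hqQR : (q:ℝ) ≤ Q := by exact_mod_cast hqQ
  have hH'0 : (0:ℝ) ≤ H' := by positivity
  clear_value ε
  have h9 : 2*ε*H' ≤ 2*(1/((Q:ℝ)+1) + 4*x*Q*H/(M:ℝ)^3)*H' := by
    nlinarith [mul_le_mul_of_nonneg_right hεε hH'0]
  linarith [hcard, h9, hqQR]

lemma good_empty (x : ℝ) : Good x ∅ ∅ :=
  ⟨by simp, by simp, by simp, by simp⟩

set_option maxHeartbeats 2000000 in
lemma good_blocks (x : ℝ) (hx : 0 ≤ x) (T N H Q : ℕ)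
    (hH : 1 ≤ H) (hQ : 1 ≤ Q) (hHT : H ≤ T) (hT : 1 ≤ T) (j : ℕ) :
    ∃ Ps, Good x (Icc (T+1) (min (T + j*H) N)) Ps ∧
      (Ps.card : ℝ) ≤ (2 * (1/((Q:ℝ)+1) + 4 * x * Q * H / (T:ℝ)^3) * H + 3 * Q)
        * (min j ((N - T)/H + 1)) := by
  set β : ℝ := 2 * (1/((Q:ℝ)+1) + 4 * x * Q * H / (T:ℝ)^3) * H + 3 * Q with hβdef
  have hβ0 : 0 ≤ β := by positivity
  set K : ℕ := (N - T)/H + 1 with hKdef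
  induction j with
  | zero =>
    refine ⟨∅, ?_, ?_⟩
    · have : Icc (T+1) (min (T + 0*H) N) = ∅ := by
        apply Finset.Icc_eq_empty
        simp only [Nat.zero_mul, Nat.add_zero]
        omega
      rw [this]
      exact good_empty x
    · simp
  | succ j ih =>
    obtain ⟨Ps, hgood, hcard⟩ := ih
    by_cases hdone : N ≤ T + j*H
    · refine ⟨Ps, ?_, ?_⟩
      · have : min (T + (j+1)*H) N = min (T + j*H) N := by
          have hjj : (j+1)*H = j*H + H := by ring
          rw [min_eq_right hdone, min_eq_right]
          omega
        rwa [this]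
      · apply le_trans hcard
        apply mul_le_mul_of_nonneg_left _ hβ0
        have : min j K ≤ min (j+1) K := by omega
        exact_mod_cast this
    · push_neg at hdone
      set M : ℕ := T + j*H with hMdef
      set top : ℕ := min (T + (j+1)*H) N with htopdef
      have hjj : (j+1)*H = j*H + H := by ring
      have hMtop : M < top := by omega
      set H' : ℕ := top - M with hH'def
      have hH'1 : 1 ≤ H' := by omega
      have hH'H : H' ≤ H := by
        have : top ≤ T + (j+1)*H := min_le_left _ _
        have h2 : T + (j+1)*H = M + H := by rw [hMdef]; ring
        omega
      have hMH' : M + H' = top := by omega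
      obtain ⟨Psb, hgoodb, hcardb⟩ := good_block_dirichlet x hx M H' H Q hQ hH'H
        (by omega) (by omega)
      have hcardb2 : (Psb.card : ℝ) ≤ β := by
        rw [hβdef]
        have hTM : (T:ℝ) ≤ M := by exact_mod_cast (by omega : T ≤ M)
        have hT0 : (0:ℝ) < T := by exact_mod_cast hT
        have hfr : 4 * x * (Q:ℝ) * H / (M:ℝ)^3 ≤ 4 * x * Q * H / (T:ℝ)^3 := by
          gcongr
        have hH'R : (H':ℝ) ≤ H := by exact_mod_cast hH'H
        have h1 : 2 * (1/((Q:ℝ)+1) + 4 * x * Q * H / (M:ℝ)^3) * H'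
            ≤ 2 * (1/((Q:ℝ)+1) + 4 * x * Q * H / (T:ℝ)^3) * H := by
          apply mul_le_mul (by linarith) hH'R (by positivity)
          positivity
        linarith [hcardb]
      have hdisj : Disjoint (Icc (T+1) (min (T + j*H) N)) (Icc (M+1) (M+H')) := by
        rw [disjoint_left]
        intro n hn hn'
        have h1 := (mem_Icc.1 hn).2
        have h2 := (mem_Icc.1 hn').1
        have : min (T + j*H) N = M := by rw [hMdef]; omega
        omega
      have hunion : Icc (T+1) (min (T + j*H) N) ∪ Icc (M+1) (M+H')
          = Icc (T+1) (min (T + (j+1)*H) N) := by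
        have hminM : min (T + j*H) N = M := by rw [hMdef]; omega
        rw [hminM]
        ext n
        simp only [mem_union, mem_Icc]
        have hMtop' : M + H' = top := hMH'
        have htT : T ≤ M := by omega
        rw [← htopdef]
        omega
      refine ⟨Ps ∪ Psb, ?_, ?_⟩
      · have := good_union hgood hgoodb hdisj
        rwa [hunion] at this
      · have hjK : j < K := by
          rw [hKdef]
          have hjdiv : j ≤ (N - T)/H := by
            rw [Nat.le_div_iff_mul_le hH]
            omega
          omega
        have hmin1 : min (j+1) K = j + 1 := by omega
        have hmin2 : min j K = j := by omega
        have hcu : ((Ps ∪ Psb).card : ℝ) ≤ (Ps.card : ℝ) + Psb.card := good_union_card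
        rw [hmin1]
        rw [hmin2] at hcard
        push_cast
        push_cast at hcard
        linarith

lemma half_le_floor {y : ℝ} (hy : 1 ≤ y) : y / 2 ≤ (⌊y⌋₊ : ℝ) := by
  by_cases h2 : y < 2
  · have h1 : (1:ℕ) ≤ ⌊y⌋₊ := Nat.le_floor (by exact_mod_cast hy)
    have : (1:ℝ) ≤ (⌊y⌋₊ : ℝ) := by exact_mod_cast h1
    linarith
  · push_neg at h2
    have := Nat.sub_one_lt_floor y
    linarith

set_option maxHeartbeats 2000000 in
theorem hyperbola_partition' :
    ∃ C : ℝ, 0 < C ∧ ∀ x : ℝ, 2 ≤ x →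
      ∃ Ps : Finset (Finset ℕ),
        (∀ P ∈ Ps, ∃ n₀ q L : ℕ, 1 ≤ n₀ ∧ 1 ≤ q ∧
          P = (Finset.range (L + 1)).image (fun l => n₀ + l * q)) ∧
        (∀ P ∈ Ps, ∀ P' ∈ Ps, P ≠ P' → Disjoint P P') ∧
        Ps.biUnion id = Finset.Icc 1 ⌊Real.sqrt x⌋₊ ∧
        (Ps.card : ℝ) ≤ C * x ^ (0.49 : ℝ) ∧
        (∀ P ∈ Ps, ∃ u v : ℚ, ∀ n ∈ P, (⌊x / (n : ℝ)⌋ : ℚ) = u * (n : ℚ) + v) := by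
  refine ⟨1048576, by norm_num, ?_⟩
  intro x hx2
  have hx0 : (0:ℝ) < x := by linarith
  have hx1 : (1:ℝ) ≤ x := by linarith
  set N : ℕ := ⌊Real.sqrt x⌋₊ with hNdef
  have hNs : (N : ℝ) ≤ x ^ (0.5 : ℝ) := by
    have h1 : (N : ℝ) ≤ Real.sqrt x := Nat.floor_le (Real.sqrt_nonneg x)
    rw [Real.sqrt_eq_rpow] at h1
    convert h1 using 2
    norm_num
  have hr049 : (0:ℝ) ≤ x ^ (0.49:ℝ) := Real.rpow_nonneg hx0.le _
  by_cases hbig : x < 2^1000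
  · -- small x : use singletons
    obtain ⟨hgood, _⟩ := good_singletons x 1 N le_rfl
    obtain ⟨g1, g2, g3, g4⟩ := hgood
    refine ⟨_, g1, g2, g3, ?_, g4⟩
    have hcard : (((Icc 1 N).image fun n => ({n} : Finset ℕ)).card : ℝ) ≤ N := by
      have h := card_image_le (s := Icc 1 N) (f := fun n => ({n} : Finset ℕ))
      have h2 : (Icc 1 N).card = N := by rw [Nat.card_Icc]; omega
      rw [h2] at h
      exact_mod_cast h
    have hsplit : x ^ (0.5:ℝ) = x ^ (0.01:ℝ) * x ^ (0.49:ℝ) := by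
      rw [← Real.rpow_add hx0]
      norm_num
    have h001 : x ^ (0.01:ℝ) ≤ 1024 := by
      have h1 : x ^ (0.01:ℝ) ≤ ((2:ℝ)^1000) ^ (0.01:ℝ) :=
        Real.rpow_le_rpow hx0.le hbig.le (by norm_num)
      have h2 : ((2:ℝ)^1000) ^ (0.01:ℝ) = 1024 := by
        rw [← Real.rpow_natCast 2 1000, ← Real.rpow_mul (by norm_num)]
        norm_num
      linarith
    calc (((Icc 1 N).image fun n => ({n} : Finset ℕ)).card : ℝ) ≤ N := hcard
      _ ≤ x ^ (0.5:ℝ) := hNs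
      _ = x ^ (0.01:ℝ) * x ^ (0.49:ℝ) := hsplit
      _ ≤ 1024 * x ^ (0.49:ℝ) := mul_le_mul_of_nonneg_right h001 hr049
      _ ≤ 1048576 * x ^ (0.49:ℝ) := by nlinarith
  · -- large x
    push_neg at hbig
    set T : ℕ := ⌊x ^ (0.49:ℝ)⌋₊ with hTdef
    set H : ℕ := ⌊x ^ (0.1:ℝ)⌋₊ with hHdef
    set Q : ℕ := ⌊x ^ (0.02:ℝ)⌋₊ with hQdef
    have hone : ∀ e : ℝ, 0 ≤ e → (1:ℝ) ≤ x ^ e := fun e he =>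
      Real.one_le_rpow hx1 he
    have hT1 : 1 ≤ T := Nat.le_floor (by exact_mod_cast hone 0.49 (by norm_num))
    have hH1 : 1 ≤ H := Nat.le_floor (by exact_mod_cast hone 0.1 (by norm_num))
    have hQ1 : 1 ≤ Q := Nat.le_floor (by exact_mod_cast hone 0.02 (by norm_num))
    have hHT : H ≤ T := Nat.floor_le_floor
      (Real.rpow_le_rpow_of_exponent_le hx1 (by norm_num))
    have hTu : (T:ℝ) ≤ x ^ (0.49:ℝ) := Nat.floor_le (by positivity)
    have hHu : (H:ℝ) ≤ x ^ (0.1:ℝ) := Nat.floor_le (by positivity)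
    have hQu : (Q:ℝ) ≤ x ^ (0.02:ℝ) := Nat.floor_le (by positivity)
    have hTl : x ^ (0.49:ℝ) / 2 ≤ (T:ℝ) := half_le_floor (hone 0.49 (by norm_num))
    have hHl : x ^ (0.1:ℝ) / 2 ≤ (H:ℝ) := half_le_floor (hone 0.1 (by norm_num))
    have hQl : x ^ (0.02:ℝ) / 2 ≤ (Q:ℝ) := half_le_floor (hone 0.02 (by norm_num))
    by_cases hNT : N ≤ T
    · -- all singletons
      obtain ⟨hgood, _⟩ := good_singletons x 1 N le_rfl
      obtain ⟨g1, g2, g3, g4⟩ := hgood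
      refine ⟨_, g1, g2, g3, ?_, g4⟩
      have hcard : (((Icc 1 N).image fun n => ({n} : Finset ℕ)).card : ℝ) ≤ N := by
        have h := card_image_le (s := Icc 1 N) (f := fun n => ({n} : Finset ℕ))
        have h2 : (Icc 1 N).card = N := by rw [Nat.card_Icc]; omega
        rw [h2] at h
        exact_mod_cast h
      have hNT' : (N:ℝ) ≤ T := by exact_mod_cast hNT
      calc (((Icc 1 N).image fun n => ({n} : Finset ℕ)).card : ℝ) ≤ N := hcard
        _ ≤ T := hNT'
        _ ≤ x ^ (0.49:ℝ) := hTu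
        _ ≤ 1048576 * x ^ (0.49:ℝ) := by nlinarith
    · push_neg at hNT
      obtain ⟨hgood1, hcard1⟩ := good_singletons x 1 T le_rfl
      obtain ⟨Ps2, hgood2, hcard2⟩ := good_blocks x hx0.le T N H Q hH1 hQ1 hHT hT1 N
      have hmin : min (T + N*H) N = N := by
        have : N ≤ N * H := Nat.le_mul_of_pos_right N (by omega)
        omega
      rw [hmin] at hgood2
      have hdisj : Disjoint (Icc 1 T) (Icc (T+1) N) := by
        rw [disjoint_left]
        intro n hn hn'
        have := (mem_Icc.1 hn).2
        have := (mem_Icc.1 hn').1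
        omega
      have hunion : Icc 1 T ∪ Icc (T+1) N = Icc 1 N := by
        ext n
        simp only [mem_union, mem_Icc]
        omega
      have hgoodU := good_union hgood1 hgood2 hdisj
      rw [hunion] at hgoodU
      obtain ⟨g1, g2, g3, g4⟩ := hgoodU
      refine ⟨_, g1, g2, g3, ?_, g4⟩
      -- cardinality chase
      have hcu := good_union_card (Ps := (Icc 1 T).image fun n => ({n} : Finset ℕ)) (Pt := Ps2)
      have hc1 : (((Icc 1 T).image fun n => ({n} : Finset ℕ)).card : ℝ) ≤ T := by
        have : T + 1 - 1 = T := by omega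
        rw [this] at hcard1
        exact_mod_cast hcard1
      -- bound β
      have hQpos : (0:ℝ) < Q := by exact_mod_cast hQ1
      have hTpos : (0:ℝ) < T := by exact_mod_cast hT1
      have hx002 : (0:ℝ) < x ^ (0.02:ℝ) := Real.rpow_pos_of_pos hx0 _
      have hx01 : (0:ℝ) < x ^ (0.1:ℝ) := Real.rpow_pos_of_pos hx0 _
      have hA1 : 1/((Q:ℝ)+1) ≤ 2 / x ^ (0.02:ℝ) := by
        rw [div_le_div_iff₀ (by linarith) hx002]
        linarith
      have hterm1 : 2 * (1/((Q:ℝ)+1)) * H ≤ 4 * x ^ (0.08:ℝ) := by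
        have h1 : 2 * (1/((Q:ℝ)+1)) * H ≤ 2 * (2 / x ^ (0.02:ℝ)) * x ^ (0.1:ℝ) := by
          apply mul_le_mul (by linarith) hHu (by positivity)
          positivity
        have h2 : 2 * (2 / x ^ (0.02:ℝ)) * x ^ (0.1:ℝ) = 4 * (x ^ (0.1:ℝ) / x ^ (0.02:ℝ)) := by
          ring
        have h3 : x ^ (0.1:ℝ) / x ^ (0.02:ℝ) = x ^ (0.08:ℝ) := by
          rw [← Real.rpow_sub hx0]
          norm_num
        rw [h2, h3] at h1
        exact h1
      have hT3 : x ^ (1.47:ℝ) ≤ 8 * (T:ℝ)^3 := by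
        have h1 : (x ^ (0.49:ℝ) / 2)^3 ≤ (T:ℝ)^3 := by
          apply pow_le_pow_left₀ (by positivity) hTl
        have h2 : (x ^ (0.49:ℝ))^3 = x ^ (1.47:ℝ) := by
          rw [← Real.rpow_natCast (x ^ (0.49:ℝ)) 3, ← Real.rpow_mul hx0.le]
          norm_num
        nlinarith [h1, h2]
      have hterm2 : 2 * (4 * x * Q * H / (T:ℝ)^3) * H ≤ 64 := by
        have hnum : 8 * x * (Q:ℝ) * (H:ℝ) * (H:ℝ) ≤ 8 * x ^ (1.22:ℝ) := by
          have e1 : x * (Q:ℝ) * (H:ℝ) * (H:ℝ)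
              ≤ x ^ (1:ℝ) * x ^ (0.02:ℝ) * x ^ (0.1:ℝ) * x ^ (0.1:ℝ) := by
            rw [Real.rpow_one]
            apply mul_le_mul (mul_le_mul (mul_le_mul le_rfl hQu (by positivity) hx0.le)
              hHu (by positivity) (by positivity)) hHu (by positivity) (by positivity)
          have e2 : x ^ (1:ℝ) * x ^ (0.02:ℝ) * x ^ (0.1:ℝ) * x ^ (0.1:ℝ) = x ^ (1.22:ℝ) := by
            rw [← Real.rpow_add hx0, ← Real.rpow_add hx0, ← Real.rpow_add hx0]
            norm_num
          linarith [e1, e2]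
        have hmono : x ^ (1.22:ℝ) ≤ x ^ (1.47:ℝ) :=
          Real.rpow_le_rpow_of_exponent_le hx1 (by norm_num)
        have hT3pos : (0:ℝ) < (T:ℝ)^3 := by positivity
        rw [show 2 * (4 * x * (Q:ℝ) * H / (T:ℝ)^3) * H = 8 * x * Q * H * H / (T:ℝ)^3 by ring]
        rw [div_le_iff₀ hT3pos]
        nlinarith [hnum, hmono, hT3]
      have hterm3 : 3 * (Q:ℝ) ≤ 3 * x ^ (0.02:ℝ) := by linarith
      have hβ : 2 * (1/((Q:ℝ)+1) + 4 * x * Q * H / (T:ℝ)^3) * H + 3 * Q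
          ≤ 71 * x ^ (0.08:ℝ) := by
        have hsum : 2 * (1/((Q:ℝ)+1) + 4 * x * Q * H / (T:ℝ)^3) * H
            = 2 * (1/((Q:ℝ)+1)) * H + 2 * (4 * x * Q * H / (T:ℝ)^3) * H := by ring
        have h64 : (64:ℝ) ≤ 64 * x ^ (0.08:ℝ) := by
          nlinarith [hone 0.08 (by norm_num)]
        have h02 : x ^ (0.02:ℝ) ≤ x ^ (0.08:ℝ) :=
          Real.rpow_le_rpow_of_exponent_le hx1 (by norm_num)
        rw [hsum]
        linarith
      -- bound K
      have hK : ((min N ((N - T)/H + 1) : ℕ) : ℝ) ≤ 3 * x ^ (0.4:ℝ) := by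
        have h1 : ((min N ((N - T)/H + 1) : ℕ) : ℝ) ≤ (((N - T)/H + 1 : ℕ) : ℝ) := by
          exact_mod_cast Nat.cast_le.2 (min_le_right _ _)
        have h2 : (((N - T)/H : ℕ) : ℝ) ≤ ((N - T : ℕ) : ℝ) / H := Nat.cast_div_le
        have h3 : ((N - T : ℕ) : ℝ) ≤ N := by exact_mod_cast Nat.sub_le N T
        have hHpos : (0:ℝ) < H := by exact_mod_cast hH1
        have h4 : ((N - T : ℕ) : ℝ) / H ≤ x ^ (0.5:ℝ) / (x ^ (0.1:ℝ) / 2) := by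
          apply div_le_div₀ (by positivity) (by linarith) (by linarith) hHl
        have h5 : x ^ (0.5:ℝ) / (x ^ (0.1:ℝ) / 2) = 2 * x ^ (0.4:ℝ) := by
          rw [div_div_eq_mul_div, mul_comm, mul_div_assoc, ← Real.rpow_sub hx0]
          norm_num
        have h6 : (1:ℝ) ≤ x ^ (0.4:ℝ) := hone 0.4 (by norm_num)
        push_cast
        push_cast at h1 h2
        linarith
      have hfin : (Ps2.card : ℝ) ≤ 71 * x ^ (0.08:ℝ) * (3 * x ^ (0.4:ℝ)) := by
        apply le_trans hcard2
        apply mul_le_mul hβ hK (by positivity) (by positivity)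
      have hprod : 71 * x ^ (0.08:ℝ) * (3 * x ^ (0.4:ℝ)) = 213 * x ^ (0.48:ℝ) := by
        rw [show (71:ℝ) * x ^ (0.08:ℝ) * (3 * x ^ (0.4:ℝ))
          = 213 * (x ^ (0.08:ℝ) * x ^ (0.4:ℝ)) by ring, ← Real.rpow_add hx0]
        norm_num
      have h48 : x ^ (0.48:ℝ) ≤ x ^ (0.49:ℝ) :=
        Real.rpow_le_rpow_of_exponent_le hx1 (by norm_num)
      have htotal : (((Icc 1 T).image fun n => ({n} : Finset ℕ)).card : ℝ) + Ps2.card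
          ≤ 1048576 * x ^ (0.49:ℝ) := by
        have := hTu
        nlinarith [hc1, hfin, hprod, h48, hr049]
      linarith [hcu, htotal]


/-- Complexity of the hyperbola: there is an absolute constant `C > 0` such that for every
real `x ≥ 2`, the set `{n ∈ ℕ : 1 ≤ n ≤ √x}` can be partitioned into at most `C x^{0.49}`
arithmetic progressions, on each of which `n ↦ ⌊x/n⌋` agrees with a linear function with
rational coefficients. -/
theorem hyperbola_partition :
    ∃ C : ℝ, 0 < C ∧ ∀ x : ℝ, 2 ≤ x →
      ∃ Ps : Finset (Finset ℕ),
        (∀ P ∈ Ps, ∃ n₀ q L : ℕ, 1 ≤ n₀ ∧ 1 ≤ q ∧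
          P = (Finset.range (L + 1)).image (fun l => n₀ + l * q)) ∧
        (∀ P ∈ Ps, ∀ P' ∈ Ps, P ≠ P' → Disjoint P P') ∧
        Ps.biUnion id = Finset.Icc 1 ⌊Real.sqrt x⌋₊ ∧
        (Ps.card : ℝ) ≤ C * x ^ (0.49 : ℝ) ∧
        (∀ P ∈ Ps, ∃ u v : ℚ, ∀ n ∈ P, (⌊x / (n : ℝ)⌋ : ℚ) = u * (n : ℚ) + v) := by
  exact hyperbola_partition'
end

section
/- There exist absolute constants c₀ > 0, C > 0 and x₀ > 0 such that for every real c with 0 < c < c₀, every real x ≥ x₀, and every real x' with 0 < x − x' ≤ x^{1/2+c}, the set {n ∈ ℕ : x^{1/2−c} ≤ n ≤ √x} can be partitioned into at most C·x^{1/2−c₀} arithmetic progressions, such that for each progression P in the partition: (i) there exist rational numbers u, v with ⌊x/n⌋ = u·n + v for all n ∈ P, and (ii) the function n ↦ ⌊x/n⌋ − ⌊x'/n⌋ is constant on P. -/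
open Finset

/-- Convexity three-point inequality for `y ↦ x/(nn+qq*y) + aa*y`. -/
lemma chord_aux (x aa nn qq : ℝ) (hx : 0 ≤ x) (hn : 0 < nn) (hq : 0 < qq)
    {σ₁ σ₂ σ₃ : ℝ} (h0 : 0 ≤ σ₁) (h12 : σ₁ ≤ σ₂) (h23 : σ₂ ≤ σ₃) :
    x / (nn + qq*σ₂) + aa*σ₂ ≤ max (x / (nn + qq*σ₁) + aa*σ₁) (x / (nn + qq*σ₃) + aa*σ₃) := by
  have hp : 0 < nn + qq*σ₁ := by nlinarith
  have ht : 0 < nn + qq*σ₂ := by nlinarith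
  have hr : 0 < nn + qq*σ₃ := by nlinarith
  rcases eq_or_lt_of_le (h12.trans h23) with h13 | h13
  · have h2 : σ₂ = σ₁ := le_antisymm (h13 ▸ h23) h12
    subst h2
    exact le_max_left _ _
  · set d₁ := σ₂ - σ₁ with hd₁
    set d₂ := σ₃ - σ₂ with hd₂
    have hd₁0 : 0 ≤ d₁ := by simp [hd₁]; linarith
    have hd₂0 : 0 ≤ d₂ := by simp [hd₂]; linarith
    have hdd : 0 < d₁ + d₂ := by simp [hd₁, hd₂]; linarith
    have key : (x / (nn + qq*σ₂) + aa*σ₂) * (d₁ + d₂) ≤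
        (x / (nn + qq*σ₁) + aa*σ₁) * d₂ + (x / (nn + qq*σ₃) + aa*σ₃) * d₁ := by
      rw [div_add' _ _ _ ht.ne', div_add' _ _ _ hp.ne', div_add' _ _ _ hr.ne',
        div_mul_eq_mul_div, div_mul_eq_mul_div, div_mul_eq_mul_div,
        div_add_div _ _ hp.ne' hr.ne', div_le_div_iff₀ ht (by positivity)]
      have hkey : 0 ≤ x * qq^2 * (d₁ * d₂ * (d₁ + d₂)) := by positivity
      have hid : ((x + aa*σ₁*(nn+qq*σ₁))*d₂*(nn+qq*σ₃) + (nn+qq*σ₁)*((x+aa*σ₃*(nn+qq*σ₃))*d₁))*(nn+qq*σ₂)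
          - (x + aa*σ₂*(nn+qq*σ₂))*(d₁+d₂)*((nn+qq*σ₁)*(nn+qq*σ₃)) = x*qq^2*(d₁*d₂*(d₁+d₂)) := by
        simp only [hd₁, hd₂]; ring
      linarith [hkey, hid]
    have h1 : x / (nn + qq*σ₁) + aa*σ₁ ≤ max (x / (nn + qq*σ₁) + aa*σ₁) (x / (nn + qq*σ₃) + aa*σ₃) :=
      le_max_left _ _
    have h3 : x / (nn + qq*σ₃) + aa*σ₃ ≤ max (x / (nn + qq*σ₁) + aa*σ₁) (x / (nn + qq*σ₃) + aa*σ₃) :=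
      le_max_right _ _
    nlinarith [key, h1, h3]

/-- Partition `range (S+1)` into at most 16 integer intervals on each of which the
quasiconvex, two-valued functions `f` and `f'` are both constant. -/
lemma fibers (f f' : ℕ → ℤ) (S : ℕ)
    (hqc : ∀ ⦃s t u : ℕ⦄, s ≤ t → t ≤ u → u ≤ S → f t ≤ max (f s) (f u))
    (hqc' : ∀ ⦃s t u : ℕ⦄, s ≤ t → t ≤ u → u ≤ S → f' t ≤ max (f' s) (f' u))
    (h2v : ∀ s ≤ S, ∀ s' ≤ S, f s ≤ f s' + 1)
    (h2v' : ∀ s ≤ S, ∀ s' ≤ S, f' s ≤ f' s' + 1) :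
    ∃ Ps : Finset (Finset ℕ),
      (∀ P ∈ Ps, ∃ lo hi, lo ≤ hi ∧ hi ≤ S ∧ P = Finset.Icc lo hi) ∧
      (∀ P ∈ Ps, ∀ P' ∈ Ps, P ≠ P' → Disjoint P P') ∧
      Ps.biUnion id = Finset.range (S+1) ∧
      Ps.card ≤ 16 ∧
      (∀ P ∈ Ps, ∃ cf : ℤ, ∀ s ∈ P, f s = cf) ∧
      (∀ P ∈ Ps, ∃ cg : ℤ, ∀ s ∈ P, f' s = cg) := by
  classical
  have hRne : (Finset.range (S+1)).Nonempty := ⟨0, by simp⟩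
  obtain ⟨s₁, hs₁R, hs₁⟩ := (Finset.range (S+1)).exists_min_image f hRne
  obtain ⟨s₂, hs₂R, hs₂⟩ := (Finset.range (S+1)).exists_min_image f' hRne
  have hmemS : ∀ s, s ∈ Finset.range (S+1) ↔ s ≤ S := by
    intro s; rw [Finset.mem_range, Nat.lt_succ_iff]
  set k := f s₁ with hk
  set k' := f' s₂ with hk'
  have hEne : ((Finset.range (S+1)).filter (fun s => f s = k)).Nonempty :=
    ⟨s₁, Finset.mem_filter.mpr ⟨hs₁R, rfl⟩⟩
  have hE'ne : ((Finset.range (S+1)).filter (fun s => f' s = k')).Nonempty :=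
    ⟨s₂, Finset.mem_filter.mpr ⟨hs₂R, rfl⟩⟩
  set u₁ := ((Finset.range (S+1)).filter (fun s => f s = k)).min' hEne with hu₁
  set v₁ := ((Finset.range (S+1)).filter (fun s => f s = k)).max' hEne with hv₁
  set u₂ := ((Finset.range (S+1)).filter (fun s => f' s = k')).min' hE'ne with hu₂
  set v₂ := ((Finset.range (S+1)).filter (fun s => f' s = k')).max' hE'ne with hv₂
  have hv₁S : v₁ ≤ S :=
    (hmemS _).mp (Finset.mem_filter.mp (Finset.max'_mem _ hEne)).1
  have hv₂S : v₂ ≤ S :=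
    (hmemS _).mp (Finset.mem_filter.mp (Finset.max'_mem _ hE'ne)).1
  have hfu₁ : f u₁ = k := (Finset.mem_filter.mp (Finset.min'_mem _ hEne)).2
  have hfv₁ : f v₁ = k := (Finset.mem_filter.mp (Finset.max'_mem _ hEne)).2
  have hfu₂ : f' u₂ = k' := (Finset.mem_filter.mp (Finset.min'_mem _ hE'ne)).2
  have hfv₂ : f' v₂ = k' := (Finset.mem_filter.mp (Finset.max'_mem _ hE'ne)).2
  have hcf : ∀ s ≤ S, (f s = k ↔ (u₁ ≤ s ∧ s ≤ v₁)) := by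
    intro s hs
    constructor
    · intro h
      have hsE : s ∈ (Finset.range (S+1)).filter (fun s => f s = k) :=
        Finset.mem_filter.mpr ⟨(hmemS s).mpr hs, h⟩
      exact ⟨Finset.min'_le _ s hsE, Finset.le_max' _ s hsE⟩
    · rintro ⟨h1, h2⟩
      have h3 : f s ≤ max (f u₁) (f v₁) := hqc h1 h2 hv₁S
      have h4 : k ≤ f s := hs₁ s ((hmemS s).mpr hs)
      rw [hfu₁, hfv₁, max_self] at h3
      omega
  have hcf' : ∀ s ≤ S, (f' s = k' ↔ (u₂ ≤ s ∧ s ≤ v₂)) := by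
    intro s hs
    constructor
    · intro h
      have hsE : s ∈ (Finset.range (S+1)).filter (fun s => f' s = k') :=
        Finset.mem_filter.mpr ⟨(hmemS s).mpr hs, h⟩
      exact ⟨Finset.min'_le _ s hsE, Finset.le_max' _ s hsE⟩
    · rintro ⟨h1, h2⟩
      have h3 : f' s ≤ max (f' u₂) (f' v₂) := hqc' h1 h2 hv₂S
      have h4 : k' ≤ f' s := hs₂ s ((hmemS s).mpr hs)
      rw [hfu₂, hfv₂, max_self] at h3
      omega
  have h2vk : ∀ s ≤ S, f s = k ∨ f s = k + 1 := by
    intro s hs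
    have h1 : k ≤ f s := hs₁ s ((hmemS s).mpr hs)
    have h2 : f s ≤ k + 1 := h2v s hs s₁ ((hmemS s₁).mp hs₁R)
    omega
  have h2vk' : ∀ s ≤ S, f' s = k' ∨ f' s = k' + 1 := by
    intro s hs
    have h1 : k' ≤ f' s := hs₂ s ((hmemS s).mpr hs)
    have h2 : f' s ≤ k' + 1 := h2v' s hs s₂ ((hmemS s₂).mp hs₂R)
    omega
  set σ : ℕ → Bool × Bool × Bool × Bool :=
    fun s => (decide (s < u₁), decide (s ≤ v₁), decide (s < u₂), decide (s ≤ v₂)) with hσ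
  set fib : Bool × Bool × Bool × Bool → Finset ℕ :=
    fun b => (Finset.range (S+1)).filter (fun s => σ s = b) with hfib
  have hfibmem : ∀ b s, s ∈ fib b ↔ (s ≤ S ∧ σ s = b) := by
    intro b s
    rw [hfib]
    rw [Finset.mem_filter, hmemS]
  have hconv : ∀ b, ∀ s ∈ fib b, ∀ u ∈ fib b, ∀ t, s ≤ t → t ≤ u → t ∈ fib b := by
    rintro ⟨b1, b2, b3, b4⟩ s hsm u hum t hst htu
    rw [hfibmem] at hsm hum ⊢
    obtain ⟨hs1, hsσ⟩ := hsm
    obtain ⟨hu1, huσ⟩ := hum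
    rw [hσ] at hsσ huσ
    simp only [Prod.mk.injEq] at hsσ huσ
    obtain ⟨e1, e2, e3, e4⟩ := hsσ
    obtain ⟨g1, g2, g3, g4⟩ := huσ
    refine ⟨by omega, ?_⟩
    rw [hσ]
    simp only [Prod.mk.injEq]
    refine ⟨?_, ?_, ?_, ?_⟩
    · cases b1 with
      | false =>
        have := of_decide_eq_false e1
        exact decide_eq_false (by omega)
      | true =>
        have := of_decide_eq_true g1
        exact decide_eq_true (by omega)
    · cases b2 with
      | false =>
        have := of_decide_eq_false e2
        exact decide_eq_false (by omega)
      | true =>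
        have := of_decide_eq_true g2
        exact decide_eq_true (by omega)
    · cases b3 with
      | false =>
        have := of_decide_eq_false e3
        exact decide_eq_false (by omega)
      | true =>
        have := of_decide_eq_true g3
        exact decide_eq_true (by omega)
    · cases b4 with
      | false =>
        have := of_decide_eq_false e4
        exact decide_eq_false (by omega)
      | true =>
        have := of_decide_eq_true g4
        exact decide_eq_true (by omega)
  refine ⟨(Finset.univ.image fib).filter (fun P => P.Nonempty), ?_, ?_, ?_, ?_, ?_, ?_⟩
  · rintro P hP
    rw [Finset.mem_filter, Finset.mem_image] at hP
    obtain ⟨⟨b, _, rfl⟩, hne⟩ := hP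
    refine ⟨(fib b).min' hne, (fib b).max' hne,
      Finset.min'_le _ _ (Finset.max'_mem _ hne),
      ((hfibmem b _).mp (Finset.max'_mem _ hne)).1, ?_⟩
    ext t
    simp only [Finset.mem_Icc]
    constructor
    · intro ht
      exact ⟨Finset.min'_le _ _ ht, Finset.le_max' _ _ ht⟩
    · rintro ⟨h1, h2⟩
      exact hconv b _ (Finset.min'_mem _ hne) _ (Finset.max'_mem _ hne) t h1 h2
  · rintro P hP P' hP' hne
    rw [Finset.mem_filter, Finset.mem_image] at hP hP'
    obtain ⟨⟨b, _, rfl⟩, _⟩ := hP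
    obtain ⟨⟨b', _, rfl⟩, _⟩ := hP'
    rw [Finset.disjoint_left]
    intro s hs hs'
    rw [hfibmem] at hs hs'
    exact hne (by rw [← hs.2, ← hs'.2])
  · ext s
    simp only [Finset.mem_biUnion, Finset.mem_filter, Finset.mem_image, id]
    constructor
    · rintro ⟨P, ⟨⟨b, _, rfl⟩, _⟩, hs⟩
      exact Finset.mem_range.mpr (Nat.lt_succ_iff.mpr ((hfibmem b s).mp hs).1)
    · intro hs
      have hsS : s ≤ S := (hmemS s).mp hs
      refine ⟨fib (σ s), ⟨⟨σ s, Finset.mem_univ _, rfl⟩, ⟨s, (hfibmem _ s).mpr ⟨hsS, rfl⟩⟩⟩,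
        (hfibmem _ s).mpr ⟨hsS, rfl⟩⟩
  · calc ((Finset.univ.image fib).filter (fun P => P.Nonempty)).card
        ≤ (Finset.univ.image fib).card := Finset.card_filter_le _ _
      _ ≤ (Finset.univ : Finset (Bool × Bool × Bool × Bool)).card := Finset.card_image_le
      _ = 16 := by simp
  · rintro P hP
    rw [Finset.mem_filter, Finset.mem_image] at hP
    obtain ⟨⟨b, _, rfl⟩, hne⟩ := hP
    obtain ⟨b1, b2, b3, b4⟩ := b
    refine ⟨if b1 = false ∧ b2 = true then k else k + 1, ?_⟩
    intro s hs
    rw [hfibmem] at hs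
    obtain ⟨hsS, hσs⟩ := hs
    rw [hσ] at hσs
    simp only [Prod.mk.injEq] at hσs
    obtain ⟨e1, e2, e3, e4⟩ := hσs
    by_cases hb : b1 = false ∧ b2 = true
    · rw [if_pos hb]
      rw [hcf s hsS]
      have p1 : ¬ (s < u₁) := of_decide_eq_false (hb.1 ▸ e1)
      have p2 : s ≤ v₁ := of_decide_eq_true (hb.2 ▸ e2)
      exact ⟨by omega, p2⟩
    · rw [if_neg hb]
      rcases h2vk s hsS with h | h
      · exfalso
        obtain ⟨w1, w2⟩ := (hcf s hsS).mp h
        exact hb ⟨by rw [← e1]; exact decide_eq_false (by omega),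
          by rw [← e2]; exact decide_eq_true w2⟩
      · exact h
  · rintro P hP
    rw [Finset.mem_filter, Finset.mem_image] at hP
    obtain ⟨⟨b, _, rfl⟩, hne⟩ := hP
    obtain ⟨b1, b2, b3, b4⟩ := b
    refine ⟨if b3 = false ∧ b4 = true then k' else k' + 1, ?_⟩
    intro s hs
    rw [hfibmem] at hs
    obtain ⟨hsS, hσs⟩ := hs
    rw [hσ] at hσs
    simp only [Prod.mk.injEq] at hσs
    obtain ⟨e1, e2, e3, e4⟩ := hσs
    by_cases hb : b3 = false ∧ b4 = true
    · rw [if_pos hb]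
      rw [hcf' s hsS]
      have p1 : ¬ (s < u₂) := of_decide_eq_false (hb.1 ▸ e3)
      have p2 : s ≤ v₂ := of_decide_eq_true (hb.2 ▸ e4)
      exact ⟨by omega, p2⟩
    · rw [if_neg hb]
      rcases h2vk' s hsS with h | h
      · exfalso
        obtain ⟨w1, w2⟩ := (hcf' s hsS).mp h
        exact hb ⟨by rw [← e3]; exact decide_eq_false (by omega),
          by rw [← e4]; exact decide_eq_true w2⟩
      · exact h

/-- Partition of a single residue class into at most 16 progressions on which
`⌊x/n⌋` is exactly linear and `⌊x/n⌋ - ⌊x'/n⌋` is constant. -/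
lemma classLemma (x x' : ℝ) (hx : 0 ≤ x) (hx' : 0 ≤ x') (n₀ q : ℕ) (a : ℤ) (S : ℕ)
    (hn₀ : 1 ≤ n₀) (hq : 1 ≤ q)
    (hosc : ∀ s ≤ S, |x / ((n₀ + q*s : ℕ) : ℝ) + (a:ℝ)*s - x / (n₀:ℝ)| ≤ 1/4)
    (hosc' : ∀ s ≤ S, |x' / ((n₀ + q*s : ℕ) : ℝ) + (a:ℝ)*s - x' / (n₀:ℝ)| ≤ 1/4) :
    ∃ Ps : Finset (Finset ℕ),
      (∀ P ∈ Ps, ∃ m L : ℕ, n₀ ≤ m ∧ P = (Finset.range (L+1)).image (fun l => m + l * q)) ∧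
      (∀ P ∈ Ps, ∀ P' ∈ Ps, P ≠ P' → Disjoint P P') ∧
      Ps.biUnion id = (Finset.range (S+1)).image (fun s => n₀ + q*s) ∧
      Ps.card ≤ 16 ∧
      (∀ P ∈ Ps, ∃ u v : ℚ, ∀ n ∈ P, (⌊x / (n:ℝ)⌋ : ℚ) = u * (n:ℚ) + v) ∧
      (∀ P ∈ Ps, ∃ K : ℤ, ∀ n ∈ P, ⌊x / (n:ℝ)⌋ - ⌊x' / (n:ℝ)⌋ = K) := by
  classical
  have hq0 : 0 < q := hq
  have hqR : (0:ℝ) < q := by exact_mod_cast hq0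
  have hn₀R : (0:ℝ) < n₀ := by exact_mod_cast hn₀
  set g : ℕ → ℝ := fun s => x / ((n₀ + q*s : ℕ) : ℝ) + (a:ℝ)*s with hg
  set g' : ℕ → ℝ := fun s => x' / ((n₀ + q*s : ℕ) : ℝ) + (a:ℝ)*s with hg'
  set f : ℕ → ℤ := fun s => ⌊x / ((n₀ + q*s : ℕ) : ℝ)⌋ + a*s with hf
  set f' : ℕ → ℤ := fun s => ⌊x' / ((n₀ + q*s : ℕ) : ℝ)⌋ + a*s with hf'
  have hfg : ∀ s, f s = ⌊g s⌋ := by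
    intro s
    show ⌊x / ((n₀ + q*s : ℕ) : ℝ)⌋ + a*(s:ℤ) = ⌊x / ((n₀ + q*s : ℕ) : ℝ) + (a:ℝ)*(s:ℝ)⌋
    rw [show (a:ℝ)*(s:ℝ) = ((a * (s:ℤ) : ℤ) : ℝ) by push_cast; ring, Int.floor_add_intCast]
  have hfg' : ∀ s, f' s = ⌊g' s⌋ := by
    intro s
    show ⌊x' / ((n₀ + q*s : ℕ) : ℝ)⌋ + a*(s:ℤ) = ⌊x' / ((n₀ + q*s : ℕ) : ℝ) + (a:ℝ)*(s:ℝ)⌋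
    rw [show (a:ℝ)*(s:ℝ) = ((a * (s:ℤ) : ℤ) : ℝ) by push_cast; ring, Int.floor_add_intCast]
  have hcast : ∀ s : ℕ, ((n₀ + q*s : ℕ) : ℝ) = (n₀:ℝ) + (q:ℝ)*(s:ℝ) := by
    intro s; push_cast; ring
  have hgchord : ∀ (z : ℝ), 0 ≤ z → ∀ ⦃s t u : ℕ⦄, s ≤ t → t ≤ u →
      z / ((n₀ + q*t : ℕ) : ℝ) + (a:ℝ)*t ≤
        max (z / ((n₀ + q*s : ℕ) : ℝ) + (a:ℝ)*s) (z / ((n₀ + q*u : ℕ) : ℝ) + (a:ℝ)*u) := by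
    intro z hz s t u hst htu
    have h := chord_aux z (a:ℝ) (n₀:ℝ) (q:ℝ) hz hn₀R hqR
      (σ₁ := (s:ℝ)) (σ₂ := (t:ℝ)) (σ₃ := (u:ℝ))
      (by positivity) (by exact_mod_cast hst) (by exact_mod_cast htu)
    rw [hcast s, hcast t, hcast u]
    exact h
  have hqcgen : ∀ (z : ℝ) (hz : 0 ≤ z) ⦃s t u : ℕ⦄, s ≤ t → t ≤ u →
      ⌊z / ((n₀ + q*t : ℕ) : ℝ) + (a:ℝ)*t⌋ ≤
        max ⌊z / ((n₀ + q*s : ℕ) : ℝ) + (a:ℝ)*s⌋ ⌊z / ((n₀ + q*u : ℕ) : ℝ) + (a:ℝ)*u⌋ := by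
    intro z hz s t u hst htu
    have hmax := hgchord z hz hst htu
    rcases max_cases (z / ((n₀ + q*s : ℕ) : ℝ) + (a:ℝ)*s) (z / ((n₀ + q*u : ℕ) : ℝ) + (a:ℝ)*u)
      with ⟨he, _⟩ | ⟨he, _⟩
    · exact le_max_of_le_left (Int.floor_le_floor (he ▸ hmax))
    · exact le_max_of_le_right (Int.floor_le_floor (he ▸ hmax))
  have hqc : ∀ ⦃s t u : ℕ⦄, s ≤ t → t ≤ u → u ≤ S → f t ≤ max (f s) (f u) := by
    intro s t u hst htu _
    rw [hfg, hfg, hfg]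
    exact hqcgen x hx hst htu
  have hqc' : ∀ ⦃s t u : ℕ⦄, s ≤ t → t ≤ u → u ≤ S → f' t ≤ max (f' s) (f' u) := by
    intro s t u hst htu _
    rw [hfg', hfg', hfg']
    exact hqcgen x' hx' hst htu
  have h2vgen : ∀ (G : ℕ → ℝ) (C : ℝ), (∀ s ≤ S, |G s - C| ≤ 1/4) →
      ∀ s ≤ S, ∀ s' ≤ S, ⌊G s⌋ ≤ ⌊G s'⌋ + 1 := by
    intro G C hG s hs s' hs'
    have h1 := abs_le.mp (hG s hs)
    have h2 := abs_le.mp (hG s' hs')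
    have h3 : G s < (((⌊G s'⌋ + 2) : ℤ) : ℝ) := by
      push_cast
      have := Int.lt_floor_add_one (G s')
      linarith
    have := Int.floor_lt.mpr h3
    omega
  have h2v : ∀ s ≤ S, ∀ s' ≤ S, f s ≤ f s' + 1 := by
    intro s hs s' hs'
    rw [hfg, hfg]
    exact h2vgen g (x / (n₀:ℝ)) (fun s hs => hosc s hs) s hs s' hs'
  have h2v' : ∀ s ≤ S, ∀ s' ≤ S, f' s ≤ f' s' + 1 := by
    intro s hs s' hs'
    rw [hfg', hfg']
    exact h2vgen g' (x' / (n₀:ℝ)) (fun s hs => hosc' s hs) s hs s' hs'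
  obtain ⟨Qs, hQicc, hQdisj, hQunion, hQcard, hQf, hQf'⟩ := fibers f f' S hqc hqc' h2v h2v'
  set φ : Finset ℕ → Finset ℕ := fun P => P.image (fun s => n₀ + q*s) with hφ
  have hinj : Function.Injective (fun s => n₀ + q*s) := by
    intro s s' h
    exact Nat.eq_of_mul_eq_mul_left hq0 (Nat.add_left_cancel h)
  refine ⟨Qs.image φ, ?_, ?_, ?_, ?_, ?_, ?_⟩
  · rintro P hP
    obtain ⟨Q, hQ, rfl⟩ := Finset.mem_image.mp hP
    obtain ⟨lo, hi, hlohi, hhiS, rfl⟩ := hQicc Q hQ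
    refine ⟨n₀ + q*lo, hi - lo, Nat.le_add_right _ _, ?_⟩
    ext n
    simp only [hφ, Finset.mem_image, Finset.mem_Icc, Finset.mem_range]
    constructor
    · rintro ⟨s, ⟨hlo, hhi⟩, rfl⟩
      obtain ⟨c, rfl⟩ := Nat.le.dest hlo
      exact ⟨c, by omega, by ring⟩
    · rintro ⟨l, hl, rfl⟩
      exact ⟨lo + l, ⟨by omega, by omega⟩, by ring⟩
  · rintro P hP P' hP' hne
    obtain ⟨Q, hQ, rfl⟩ := Finset.mem_image.mp hP
    obtain ⟨Q', hQ', rfl⟩ := Finset.mem_image.mp hP'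
    have hQne : Q ≠ Q' := fun h => hne (by rw [h])
    exact (Finset.disjoint_image hinj).mpr (hQdisj Q hQ Q' hQ' hQne)
  · ext n
    simp only [Finset.mem_biUnion, Finset.mem_image, id]
    constructor
    · rintro ⟨P, ⟨Q, hQ, rfl⟩, hn⟩
      obtain ⟨s, hsQ, rfl⟩ := Finset.mem_image.mp hn
      have hsR : s ∈ Finset.range (S+1) := by
        rw [← hQunion]
        exact Finset.mem_biUnion.mpr ⟨Q, hQ, hsQ⟩
      exact ⟨s, hsR, rfl⟩
    · rintro ⟨s, hs, rfl⟩
      have : s ∈ Qs.biUnion id := by rw [hQunion]; exact hs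
      obtain ⟨Q, hQ, hsQ⟩ := Finset.mem_biUnion.mp this
      exact ⟨φ Q, ⟨Q, hQ, rfl⟩, Finset.mem_image_of_mem _ hsQ⟩
  · exact Finset.card_image_le.trans hQcard
  · rintro P hP
    obtain ⟨Q, hQ, rfl⟩ := Finset.mem_image.mp hP
    obtain ⟨cf, hcf⟩ := hQf Q hQ
    refine ⟨-(a:ℚ)/(q:ℚ), (cf:ℚ) + (a:ℚ)*(n₀:ℚ)/(q:ℚ), ?_⟩
    intro n hn
    obtain ⟨s, hsQ, rfl⟩ := Finset.mem_image.mp hn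
    have hz : ⌊x / ((n₀ + q*s : ℕ) : ℝ)⌋ = cf - a*s := by
      have h1 := hcf s hsQ
      simp only [hf] at h1
      omega
    rw [hz]
    have hqQ : ((q:ℚ)) ≠ 0 := by exact_mod_cast hq0.ne'
    push_cast
    field_simp
    ring
  · rintro P hP
    obtain ⟨Q, hQ, rfl⟩ := Finset.mem_image.mp hP
    obtain ⟨cf, hcf⟩ := hQf Q hQ
    obtain ⟨cg, hcg⟩ := hQf' Q hQ
    refine ⟨cf - cg, ?_⟩
    intro n hn
    obtain ⟨s, hsQ, rfl⟩ := Finset.mem_image.mp hn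
    have h1 := hcf s hsQ
    have h2 := hcg s hsQ
    simp only [hf] at h1
    simp only [hf'] at h2
    omega

set_option maxHeartbeats 1000000 in
/-- The key oscillation estimate, real-variable core. -/
lemma osc_core (y x x' aR qR MR nR rR sR : ℝ)
    (hy : 300 ≤ y) (hx : x = y^24) (hd1 : 0 < x - x') (hd2 : x - x' ≤ y^13)
    (hNy : y^11 ≤ nR) (hM1 : y ≤ MR) (hM2 : MR ≤ 2*y)
    (hq1 : 1 ≤ qR) (hqQ : qR ≤ MR^2)
    (happ : |x/nR^2 - aR/qR| ≤ 1/(MR^2*qR))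
    (hr0 : 0 ≤ rR) (hs0 : 0 ≤ sR) (hrs : rR + qR*sR ≤ qR*MR) :
    |x/(nR+rR+qR*sR) + aR*sR - x/(nR+rR)| ≤ 1/4 ∧
    |x'/(nR+rR+qR*sR) + aR*sR - x'/(nR+rR)| ≤ 1/4 := by
  have hy0 : (0:ℝ) < y := by linarith
  have hx1 : (1:ℝ) ≤ x := by
    rw [hx]
    calc (1:ℝ) = 1^24 := by norm_num
    _ ≤ y^24 := pow_le_pow_left₀ (by norm_num) (by linarith) 24
  have hx0 : (0:ℝ) < x := by linarith
  have hN0 : (0:ℝ) < nR := lt_of_lt_of_le (by positivity) hNy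
  have hM0 : (0:ℝ) < MR := by linarith
  have hq0 : (0:ℝ) < qR := by linarith
  have hM300 : (300:ℝ) ≤ MR := le_trans hy hM1
  have hT0 : 0 ≤ qR*sR := by positivity
  have hA10 : 0 < nR + rR := by linarith
  have hA20 : 0 < nR + rR + qR*sR := by linarith
  have hqM3 : qR*MR ≤ MR^3 := by nlinarith
  have hTM3 : qR*sR ≤ MR^3 := by linarith
  have hrM3 : rR ≤ MR^3 := by nlinarith
  have hM3y : MR^3 ≤ 8*y^3 := by
    have h1 := pow_le_pow_left₀ hM0.le hM2 3
    have h2 : (2*y)^3 = 8*y^3 := by ring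
    linarith
  have hy8 : (8:ℝ) ≤ y^8 := by
    calc (8:ℝ) ≤ 300^8 := by norm_num
    _ ≤ y^8 := pow_le_pow_left₀ (by norm_num) hy 8
  have hM3N : MR^3 ≤ nR := by
    have h0 := mul_le_mul_of_nonneg_left hy8 (pow_pos hy0 3).le
    have h1 : y^3*y^8 = y^11 := by ring
    linarith
  have hN3 : y^33 ≤ nR^3 := by
    calc y^33 = (y^11)^3 := by ring
    _ ≤ nR^3 := pow_le_pow_left₀ (by positivity) hNy 3
  have hN2 : y^22 ≤ nR^2 := by
    calc y^22 = (y^11)^2 := by ring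
    _ ≤ nR^2 := pow_le_pow_left₀ (by positivity) hNy 2
  have hM6 : MR^6 ≤ 64*y^6 := by
    have h1 : (MR^3)^2 ≤ (8*y^3)^2 := pow_le_pow_left₀ (by positivity) hM3y 2
    have h2 : (MR^3)^2 = MR^6 := by ring
    have h3 : (8*y^3)^2 = 64*y^6 := by ring
    linarith
  have haS : aR*sR = (aR/qR)*(qR*sR) := by field_simp
  have hE2 : |(aR/qR - x/nR^2)*(qR*sR)| ≤ 1/MR := by
    rw [abs_mul, abs_of_nonneg hT0]
    have h1 : |aR/qR - x/nR^2| ≤ 1/(MR^2*qR) := by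
      rw [abs_sub_comm]; exact happ
    calc |aR/qR - x/nR^2| * (qR*sR) ≤ (1/(MR^2*qR)) * (qR*MR) := by
          apply mul_le_mul h1 (by linarith) hT0 (by positivity)
    _ = 1/MR := by field_simp
  have hNum0 : 0 ≤ (nR+rR)*(nR+rR+qR*sR) - nR^2 := by nlinarith
  have hNum : (nR+rR)*(nR+rR+qR*sR) - nR^2 ≤ 5*nR*MR^3 := by nlinarith
  have hident : x/(nR+rR+qR*sR) - x/(nR+rR) + (x/nR^2)*(qR*sR)
      = x*(qR*sR)*((nR+rR)*(nR+rR+qR*sR) - nR^2)/(nR^2*(nR+rR)*(nR+rR+qR*sR)) := by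
    field_simp
    ring
  have hE1 : |x/(nR+rR+qR*sR) - x/(nR+rR) + (x/nR^2)*(qR*sR)| ≤ 320/y^3 := by
    rw [hident, abs_of_nonneg (by positivity)]
    calc x*(qR*sR)*((nR+rR)*(nR+rR+qR*sR) - nR^2)/(nR^2*(nR+rR)*(nR+rR+qR*sR))
        ≤ (x*MR^3*(5*nR*MR^3))/(nR^2*nR*nR) := by
          apply div_le_div₀ (by positivity) ?_ (by positivity) ?_
          · have h1 : x*(qR*sR) ≤ x*MR^3 := by nlinarith
            nlinarith [mul_le_mul h1 hNum hNum0 (by positivity : (0:ℝ) ≤ x*MR^3)]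
          · nlinarith [mul_le_mul (le_refl (nR^2)) (mul_le_mul (by linarith : nR ≤ nR + rR) (by linarith : nR ≤ nR + rR + qR*sR) hN0.le hA10.le) (by positivity) (by positivity : (0:ℝ) ≤ nR^2)]
    _ = 5*x*MR^6/nR^3 := by field_simp
    _ ≤ 320*y^30/y^33 := by
          apply div_le_div₀ (by positivity) ?_ (by positivity) hN3
          rw [hx]
          nlinarith [pow_pos hy0 24, pow_pos hy0 6]
    _ = 320/y^3 := by
          rw [show (33:ℕ) = 30 + 3 by norm_num, pow_add]
          field_simp
  have hxsmall : 320/y^3 + 1/MR ≤ 1/8 := by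
    have h1 : 320/y^3 ≤ 320/300^3 := by
      apply div_le_div_of_nonneg_left (by norm_num) (by norm_num) (pow_le_pow_left₀ (by norm_num) hy 3)
    have h2 : 1/MR ≤ 1/300 := by
      apply div_le_div_of_nonneg_left (by norm_num) (by norm_num) hM300
    norm_num at h1 h2 ⊢
    linarith
  have hxbound : |x/(nR+rR+qR*sR) + aR*sR - x/(nR+rR)| ≤ 1/8 := by
    rw [haS]
    have hsplit : x/(nR+rR+qR*sR) + (aR/qR)*(qR*sR) - x/(nR+rR)
        = (x/(nR+rR+qR*sR) - x/(nR+rR) + (x/nR^2)*(qR*sR)) + ((aR/qR - x/nR^2)*(qR*sR)) := by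
      ring
    rw [hsplit]
    calc |(x/(nR+rR+qR*sR) - x/(nR+rR) + (x/nR^2)*(qR*sR)) + ((aR/qR - x/nR^2)*(qR*sR))|
        ≤ |x/(nR+rR+qR*sR) - x/(nR+rR) + (x/nR^2)*(qR*sR)| + |(aR/qR - x/nR^2)*(qR*sR)| :=
          abs_add_le _ _
    _ ≤ 320/y^3 + 1/MR := add_le_add hE1 hE2
    _ ≤ 1/8 := hxsmall
  refine ⟨hxbound.trans (by norm_num), ?_⟩
  have hdelta : |(x-x')/(nR+rR+qR*sR) - (x-x')/(nR+rR)| ≤ 8/y^6 := by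
    have hid2 : (x-x')/(nR+rR+qR*sR) - (x-x')/(nR+rR)
        = -((x-x')*(qR*sR)/((nR+rR)*(nR+rR+qR*sR))) := by
      field_simp
      ring
    rw [hid2, abs_neg, abs_of_nonneg (by positivity)]
    calc (x-x')*(qR*sR)/((nR+rR)*(nR+rR+qR*sR)) ≤ (y^13*(8*y^3))/(y^11*y^11) := by
          apply div_le_div₀ (by positivity) ?_ (by positivity) ?_
          · nlinarith [mul_le_mul hd2 (hTM3.trans hM3y) hT0 (by positivity : (0:ℝ) ≤ y^13)]
          · nlinarith [mul_le_mul hNy hNy (by positivity : (0:ℝ) ≤ y^11) hN0.le]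
    _ = 8/y^6 := by
          field_simp
  have h8y6 : 8/y^6 ≤ 1/8 := by
    have h1 : 8/y^6 ≤ 8/300^6 := by
      apply div_le_div_of_nonneg_left (by norm_num) (by norm_num) (pow_le_pow_left₀ (by norm_num) hy 6)
    norm_num at h1 ⊢
    linarith
  have hid3 : x'/(nR+rR+qR*sR) + aR*sR - x'/(nR+rR)
      = (x/(nR+rR+qR*sR) + aR*sR - x/(nR+rR)) - ((x-x')/(nR+rR+qR*sR) - (x-x')/(nR+rR)) := by
    ring
  rw [hid3]
  calc |(x/(nR+rR+qR*sR) + aR*sR - x/(nR+rR)) - ((x-x')/(nR+rR+qR*sR) - (x-x')/(nR+rR))|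
      ≤ |x/(nR+rR+qR*sR) + aR*sR - x/(nR+rR)| + |(x-x')/(nR+rR+qR*sR) - (x-x')/(nR+rR)| :=
        abs_sub _ _
  _ ≤ 1/8 + 8/y^6 := add_le_add hxbound hdelta
  _ ≤ 1/4 := by linarith

/-- Oscillation estimate, natural-number wrapper. -/
lemma osc_lemma (y x x' : ℝ) (hy : 300 ≤ y) (hx : x = y^24)
    (hd1 : 0 < x - x') (hd2 : x - x' ≤ y^13)
    (N M q r s : ℕ) (a : ℤ)
    (hNy : y^11 ≤ (N:ℝ)) (hM1 : y ≤ (M:ℝ)) (hM2 : (M:ℝ) ≤ 2*y)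
    (hq1 : 1 ≤ q) (hqQ : q ≤ M^2)
    (happ : |x/((N:ℝ))^2 - (a:ℝ)/(q:ℝ)| ≤ 1/((M:ℝ)^2 * (q:ℝ)))
    (hrs : r + q*s ≤ q*M) :
    |x / (((N+r) + q*s : ℕ):ℝ) + (a:ℝ)*s - x / ((N+r : ℕ):ℝ)| ≤ 1/4 ∧
    |x' / (((N+r) + q*s : ℕ):ℝ) + (a:ℝ)*s - x' / ((N+r : ℕ):ℝ)| ≤ 1/4 := by
  have e2 : (((N+r) + q*s : ℕ):ℝ) = (N:ℝ)+(r:ℝ)+(q:ℝ)*(s:ℝ) := by push_cast; ring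
  have e1 : ((N+r : ℕ):ℝ) = (N:ℝ)+(r:ℝ) := by push_cast; ring
  obtain ⟨h1, h2⟩ := osc_core y x x' (a:ℝ) (q:ℝ) (M:ℝ) (N:ℝ) (r:ℝ) (s:ℝ)
    hy hx hd1 hd2 hNy hM1 hM2 (by exact_mod_cast hq1) (by exact_mod_cast hqQ) happ
    (Nat.cast_nonneg r) (Nat.cast_nonneg s) (by exact_mod_cast hrs)
  rw [e1, e2]
  exact ⟨h1, h2⟩

set_option maxHeartbeats 1600000 in
/-- Greedy block construction: partition `Ico N (B+1)` into progressions. -/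
lemma build (y x x' : ℝ) (hy : 300 ≤ y) (hx : x = y^24)
    (hd1 : 0 < x - x') (hd2 : x - x' ≤ y^13)
    (M A B : ℕ) (hM1 : y ≤ (M:ℝ)) (hM2 : (M:ℝ) ≤ 2*y)
    (hA1 : 1 ≤ A) (hAy : y^11 ≤ (A:ℝ)) :
    ∀ len N, A ≤ N → B + 1 ≤ N + len →
    ∃ Ps : Finset (Finset ℕ),
      (∀ P ∈ Ps, ∃ m qP L : ℕ, 1 ≤ m ∧ 1 ≤ qP ∧
        P = (Finset.range (L+1)).image (fun l => m + l * qP)) ∧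
      (∀ P ∈ Ps, ∀ P' ∈ Ps, P ≠ P' → Disjoint P P') ∧
      Ps.biUnion id = Finset.Ico N (B+1) ∧
      Ps.card * M ≤ 16*(B + 1 - N) + 16*M^3 ∧
      (∀ P ∈ Ps, ∃ u v : ℚ, ∀ n ∈ P, (⌊x / (n:ℝ)⌋ : ℚ) = u * (n:ℚ) + v) ∧
      (∀ P ∈ Ps, ∃ K : ℤ, ∀ n ∈ P, ⌊x / (n:ℝ)⌋ - ⌊x' / (n:ℝ)⌋ = K) := by
  have hy0 : (0:ℝ) < y := by linarith
  have hy1 : (1:ℝ) ≤ y := by linarith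
  have hx1 : (1:ℝ) ≤ x := by
    rw [hx]
    calc (1:ℝ) = 1^24 := by norm_num
    _ ≤ y^24 := pow_le_pow_left₀ (by norm_num) hy1 24
  have hx0 : (0:ℝ) < x := by linarith
  have hx'0 : (0:ℝ) ≤ x' := by
    have h1 : y^13 ≤ y^24 := pow_le_pow_right₀ hy1 (by norm_num)
    have h2 : y^13 ≤ x := by rw [hx]; linarith
    linarith
  have hM0 : 1 ≤ M := by
    have : (1:ℝ) ≤ (M:ℝ) := by linarith
    exact_mod_cast this
  intro len
  induction len with
  | zero =>
    intro N hAN hlen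
    refine ⟨∅, by simp, by simp, ?_, by simp, by simp, by simp⟩
    rw [Finset.biUnion_empty, eq_comm]
    exact Finset.Ico_eq_empty (by omega)
  | succ len ih =>
    intro N hAN hlen
    by_cases hNB : B + 1 ≤ N
    · exact ih N hAN (by omega)
    · push_neg at hNB
      have hN1 : 1 ≤ N := le_trans hA1 hAN
      have hNy : y^11 ≤ (N:ℝ) := hAy.trans (by exact_mod_cast hAN)
      have hN0R : (0:ℝ) < (N:ℝ) := by exact_mod_cast hN1
      -- Dirichlet approximation at the block start
      obtain ⟨ρ, hρ1, hρ2⟩ := Real.exists_rat_abs_sub_le_and_den_le (x/(N:ℝ)^2)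
        (n := M^2) (Nat.pos_of_ne_zero (by positivity))
      set q := ρ.den with hqdef
      set a := ρ.num with hadef
      have hq1 : 1 ≤ q := ρ.pos
      have hq0R : (0:ℝ) < (q:ℝ) := by exact_mod_cast hq1
      have hM0R : (0:ℝ) < (M:ℝ) := by linarith
      have happ : |x/((N:ℝ))^2 - (a:ℝ)/(q:ℝ)| ≤ 1/((M:ℝ)^2 * (q:ℝ)) := by
        have hcast : ((ρ:ℚ):ℝ) = (a:ℝ)/(q:ℝ) := by
          rw [Rat.cast_def]
        rw [← hcast]
        refine hρ1.trans ?_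
        apply div_le_div_of_nonneg_left (by norm_num) (by positivity) ?_
        have : ((M^2:ℕ):ℝ) = (M:ℝ)^2 := by push_cast; ring
        nlinarith [hq0R]
      set h := min (q*M) (B+1-N) with hhdef
      have hqM1 : 1 ≤ q*M := Nat.mul_le_mul hq1 hM0
      have hh1 : 1 ≤ h := by omega
      have hhle : h ≤ B+1-N := min_le_right _ _
      have hhqM : h ≤ q*M := min_le_left _ _
      -- the residue classes of the block
      have hcls : ∀ r : ℕ, ∃ PsC : Finset (Finset ℕ), r < min q h →
          ((∀ P ∈ PsC, ∃ m L : ℕ, N + r ≤ m ∧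
              P = (Finset.range (L+1)).image (fun l => m + l * q)) ∧
            (∀ P ∈ PsC, ∀ P' ∈ PsC, P ≠ P' → Disjoint P P') ∧
            PsC.biUnion id = (Finset.range ((h-1-r)/q + 1)).image (fun s => (N+r) + q*s) ∧
            PsC.card ≤ 16 ∧
            (∀ P ∈ PsC, ∃ u v : ℚ, ∀ n ∈ P, (⌊x / (n:ℝ)⌋ : ℚ) = u * (n:ℚ) + v) ∧
            (∀ P ∈ PsC, ∃ K : ℤ, ∀ n ∈ P, ⌊x / (n:ℝ)⌋ - ⌊x' / (n:ℝ)⌋ = K)) := by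
        intro r
        by_cases hr : r < min q h
        · have hrq : r < q := lt_of_lt_of_le hr (min_le_left _ _)
          have hrh : r < h := lt_of_lt_of_le hr (min_le_right _ _)
          have hosc : ∀ s ≤ (h-1-r)/q,
              |x / ((N + r + q*s : ℕ) : ℝ) + (a:ℝ)*s - x / ((N+r:ℕ):ℝ)| ≤ 1/4 ∧
              |x' / ((N + r + q*s : ℕ) : ℝ) + (a:ℝ)*s - x' / ((N+r:ℕ):ℝ)| ≤ 1/4 := by
            intro s hs
            have hqs : s * q ≤ h - 1 - r := (Nat.le_div_iff_mul_le hq1).mp hs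
            have hrs : r + q*s ≤ q*M := by
              have : q*s = s*q := Nat.mul_comm _ _
              omega
            exact osc_lemma y x x' hy hx hd1 hd2 N M q r s a hNy hM1 hM2 hq1 hρ2 happ hrs
          obtain ⟨PsC, hC1, hC2, hC3, hC4, hC5, hC6⟩ :=
            classLemma x x' hx0.le hx'0 (N+r) q a ((h-1-r)/q)
              (by omega) hq1 (fun s hs => (hosc s hs).1) (fun s hs => (hosc s hs).2)
          exact ⟨PsC, fun _ => ⟨hC1, hC2, hC3, hC4, hC5, hC6⟩⟩
        · exact ⟨∅, fun hc => absurd hc hr⟩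
      choose F hF using hcls
      set PsB := (Finset.range (min q h)).biUnion F with hPsB
      obtain ⟨PsR, hR1, hR2, hR3, hR4, hR5, hR6⟩ := ih (N + h) (by omega) (by omega)
      -- membership description of PsB pieces
      have hmemB : ∀ P ∈ PsB, ∃ r < min q h, P ∈ F r := by
        intro P hP
        obtain ⟨r, hr, hPr⟩ := Finset.mem_biUnion.mp hP
        exact ⟨r, Finset.mem_range.mp hr, hPr⟩
      have hsubB : ∀ r, r < min q h → ∀ P ∈ F r, ∀ n ∈ P,
          ∃ s, s*q ≤ h-1-r ∧ n = (N+r) + q*s := by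
        intro r hr P hP n hn
        have h3 := (hF r hr).2.2.1
        have hnn : n ∈ (F r).biUnion id := Finset.mem_biUnion.mpr ⟨P, hP, hn⟩
        rw [h3] at hnn
        obtain ⟨s, hs, rfl⟩ := Finset.mem_image.mp hnn
        rw [Finset.mem_range, Nat.lt_succ_iff] at hs
        exact ⟨s, (Nat.le_div_iff_mul_le hq1).mp hs, rfl⟩
      have hrange : ∀ r, r < min q h → ∀ P ∈ F r, ∀ n ∈ P, N ≤ n ∧ n < N + h := by
        intro r hr P hP n hn
        obtain ⟨s, hs, rfl⟩ := hsubB r hr P hP n hn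
        have hs' : q*s ≤ h-1-r := by rw [Nat.mul_comm]; exact hs
        have hrh : r < h := lt_of_lt_of_le hr (min_le_right _ _)
        omega
      have hBunion : PsB.biUnion id = Finset.Ico N (N+h) := by
        ext n
        simp only [Finset.mem_biUnion, Finset.mem_Ico, id]
        constructor
        · rintro ⟨P, hP, hn⟩
          obtain ⟨r, hr, hPr⟩ := hmemB P hP
          exact ⟨(hrange r hr P hPr n hn).1, (hrange r hr P hPr n hn).2⟩
        · rintro ⟨hn1, hn2⟩
          have hjh : n - N < h := by omega
          have hrq : (n-N) % q < q := Nat.mod_lt _ hq1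
          have hrj : (n-N) % q ≤ n - N := Nat.mod_le _ _
          have hrmin : (n-N) % q < min q h := by omega
          have hmd := Nat.mod_add_div (n-N) q
          have hqs : q*((n-N)/q) ≤ (n-N) - (n-N) % q := by omega
          have hsS : (n-N)/q ≤ (h-1-(n-N) % q)/q := by
            apply (Nat.le_div_iff_mul_le hq1).mpr
            rw [Nat.mul_comm]
            omega
          have hneq : n = (N+(n-N) % q) + q*((n-N)/q) := by omega
          have h3 := (hF ((n-N) % q) hrmin).2.2.1
          have hmm : n ∈ (F ((n-N) % q)).biUnion id := by
            rw [h3]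
            exact Finset.mem_image.mpr ⟨(n-N)/q,
              Finset.mem_range.mpr (Nat.lt_succ_iff.mpr hsS), hneq.symm⟩
          obtain ⟨P, hP, hnP⟩ := Finset.mem_biUnion.mp hmm
          exact ⟨P, Finset.mem_biUnion.mpr ⟨(n-N) % q, Finset.mem_range.mpr hrmin, hP⟩, hnP⟩
      have hsubR : ∀ P ∈ PsR, ∀ n ∈ P, N + h ≤ n ∧ n < B + 1 := by
        intro P hP n hn
        have hmm : n ∈ PsR.biUnion id := Finset.mem_biUnion.mpr ⟨P, hP, hn⟩
        rw [hR3] at hmm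
        exact Finset.mem_Ico.mp hmm
      refine ⟨PsB ∪ PsR, ?_, ?_, ?_, ?_, ?_, ?_⟩
      · intro P hP
        rcases Finset.mem_union.mp hP with h1 | h1
        · obtain ⟨r, hr, hPr⟩ := hmemB P h1
          obtain ⟨m, L, hm, hPeq⟩ := (hF r hr).1 P hPr
          exact ⟨m, q, L, by omega, hq1, hPeq⟩
        · exact hR1 P h1
      · intro P hP P' hP' hPP'
        rcases Finset.mem_union.mp hP with h1 | h1 <;>
          rcases Finset.mem_union.mp hP' with h2 | h2
        · obtain ⟨r, hr, hPr⟩ := hmemB P h1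
          obtain ⟨r', hr', hPr'⟩ := hmemB P' h2
          by_cases hrr : r = r'
          · subst hrr
            exact (hF r hr).2.1 P hPr P' hPr' hPP'
          · rw [Finset.disjoint_left]
            intro n hnP hnP'
            obtain ⟨s, hs, he⟩ := hsubB r hr P hPr n hnP
            obtain ⟨s', hs', he'⟩ := hsubB r' hr' P' hPr' n hnP'
            apply hrr
            have hrq : r < q := lt_of_lt_of_le hr (min_le_left _ _)
            have hrq' : r' < q := lt_of_lt_of_le hr' (min_le_left _ _)
            have h5 : r + q*s = r' + q*s' := by omega
            have h6 : (r + q*s) % q = (r' + q*s') % q := by rw [h5]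
            rwa [Nat.add_mul_mod_self_left, Nat.add_mul_mod_self_left,
              Nat.mod_eq_of_lt hrq, Nat.mod_eq_of_lt hrq'] at h6
        · rw [Finset.disjoint_left]
          intro n hnP hnP'
          obtain ⟨r, hr, hPr⟩ := hmemB P h1
          have w1 := (hrange r hr P hPr n hnP).2
          have w2 := (hsubR P' h2 n hnP').1
          omega
        · rw [Finset.disjoint_left]
          intro n hnP hnP'
          obtain ⟨r, hr, hPr⟩ := hmemB P' h2
          have w1 := (hrange r hr P' hPr n hnP').2
          have w2 := (hsubR P h1 n hnP).1
          omega
        · exact hR2 P h1 P' h2 hPP'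
      · ext n
        simp only [Finset.mem_biUnion, Finset.mem_union, id]
        constructor
        · rintro ⟨P, hP | hP, hn⟩
          · have h1 : n ∈ PsB.biUnion id := Finset.mem_biUnion.mpr ⟨P, hP, hn⟩
            rw [hBunion, Finset.mem_Ico] at h1
            rw [Finset.mem_Ico]
            omega
          · have := hsubR P hP n hn
            rw [Finset.mem_Ico]
            omega
        · intro hn
          rw [Finset.mem_Ico] at hn
          by_cases hcase : n < N + h
          · have h1 : n ∈ PsB.biUnion id := by
              rw [hBunion, Finset.mem_Ico]; omega
            obtain ⟨P, hP, hnP⟩ := Finset.mem_biUnion.mp h1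
            exact ⟨P, Or.inl hP, hnP⟩
          · have h1 : n ∈ PsR.biUnion id := by
              rw [hR3, Finset.mem_Ico]; omega
            obtain ⟨P, hP, hnP⟩ := Finset.mem_biUnion.mp h1
            exact ⟨P, Or.inr hP, hnP⟩
      · -- cardinality
        have hB16 : PsB.card ≤ 16 * min q h := by
          calc PsB.card ≤ ∑ r ∈ Finset.range (min q h), (F r).card := Finset.card_biUnion_le
          _ ≤ ∑ _r ∈ Finset.range (min q h), 16 := by
              apply Finset.sum_le_sum
              intro r hr
              exact (hF r (Finset.mem_range.mp hr)).2.2.2.1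
          _ = 16 * min q h := by
              rw [Finset.sum_const, Finset.card_range, smul_eq_mul, Nat.mul_comm]
        have hcard1 : (PsB ∪ PsR).card ≤ PsB.card + PsR.card := Finset.card_union_le _ _
        have hqMM : q*M ≤ M^3 := by
          calc q*M ≤ M^2*M := Nat.mul_le_mul_right _ hρ2
          _ = M^3 := by ring
        by_cases hcase : q*M ≤ B+1-N
        · have hh : h = q*M := by rw [hhdef]; exact min_eq_left hcase
          have e1 : PsB.card * M ≤ 16*(q*M) := by
            calc PsB.card * M ≤ (16 * min q h) * M := Nat.mul_le_mul_right _ hB16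
            _ ≤ (16*q)*M := Nat.mul_le_mul_right _ (Nat.mul_le_mul_left 16 (min_le_left q h))
            _ = 16*(q*M) := by ring
          have e3 : (PsB ∪ PsR).card * M ≤ PsB.card*M + PsR.card*M := by
            calc (PsB ∪ PsR).card * M ≤ (PsB.card + PsR.card)*M := Nat.mul_le_mul_right _ hcard1
            _ = PsB.card*M + PsR.card*M := by ring
          omega
        · have hh : h = B+1-N := by rw [hhdef]; exact min_eq_right (by omega)
          have hPsRempty : PsR = ∅ := by
            apply Finset.eq_empty_of_forall_notMem
            intro P hP
            obtain ⟨m, qP, L, hm1, hqP, hPeq⟩ := hR1 P hP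
            have hmP : m ∈ P := by
              rw [hPeq]; exact Finset.mem_image.mpr ⟨0, by simp, by simp⟩
            have := hsubR P hP m hmP
            omega
          have e1 : PsB.card * M ≤ 16*M^3 := by
            calc PsB.card * M ≤ (16 * min q h) * M := Nat.mul_le_mul_right _ hB16
            _ ≤ (16*q)*M := Nat.mul_le_mul_right _ (Nat.mul_le_mul_left 16 (min_le_left q h))
            _ = 16*(q*M) := by ring
            _ ≤ 16*M^3 := Nat.mul_le_mul_left _ hqMM
          have e3 : (PsB ∪ PsR).card = PsB.card := by rw [hPsRempty, Finset.union_empty]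
          rw [e3]
          omega
      · intro P hP
        rcases Finset.mem_union.mp hP with h1 | h1
        · obtain ⟨r, hr, hPr⟩ := hmemB P h1
          exact (hF r hr).2.2.2.2.1 P hPr
        · exact hR5 P h1
      · intro P hP
        rcases Finset.mem_union.mp hP with h1 | h1
        · obtain ⟨r, hr, hPr⟩ := hmemB P h1
          exact (hF r hr).2.2.2.2.2 P hPr
        · exact hR6 P h1

/-- Complexity of the hyperbola, II: there are absolute constants `c₀, C, x₀ > 0` such that
for `0 < c < c₀`, `x ≥ x₀` and `0 < x − x' ≤ x^{1/2+c}`, the set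
`{n ∈ ℕ : x^{1/2−c} ≤ n ≤ √x}` can be partitioned into at most `C x^{1/2−c₀}` arithmetic
progressions, on each of which `n ↦ ⌊x/n⌋` is linear (with rational coefficients) and
`n ↦ ⌊x/n⌋ − ⌊x'/n⌋` is constant. -/
theorem hyperbola_partition_II :
    ∃ c₀ C x₀ : ℝ, 0 < c₀ ∧ 0 < C ∧ 0 < x₀ ∧
      ∀ c x x' : ℝ, 0 < c → c < c₀ → x₀ ≤ x → 0 < x - x' → x - x' ≤ x ^ ((1 : ℝ) / 2 + c) →
        ∃ Ps : Finset (Finset ℕ),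
          (∀ P ∈ Ps, ∃ n₀ q L : ℕ, 1 ≤ n₀ ∧ 1 ≤ q ∧
            P = (Finset.range (L + 1)).image (fun l => n₀ + l * q)) ∧
          (∀ P ∈ Ps, ∀ P' ∈ Ps, P ≠ P' → Disjoint P P') ∧
          Ps.biUnion id = (Finset.Icc 1 ⌊Real.sqrt x⌋₊).filter
            (fun n : ℕ => x ^ ((1 : ℝ) / 2 - c) ≤ (n : ℝ)) ∧
          (Ps.card : ℝ) ≤ C * x ^ ((1 : ℝ) / 2 - c₀) ∧
          (∀ P ∈ Ps, ∃ u v : ℚ, ∀ n ∈ P, (⌊x / (n : ℝ)⌋ : ℚ) = u * (n : ℚ) + v) ∧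
          (∀ P ∈ Ps, ∃ K : ℤ, ∀ n ∈ P, ⌊x / (n : ℝ)⌋ - ⌊x' / (n : ℝ)⌋ = K) := by
  refine ⟨1/24, 100, 300^24, by norm_num, by norm_num, by positivity, ?_⟩
  intro c x x' hc0 hc24 hx₀ hd1 hd2
  have hx0 : (0:ℝ) < x := lt_of_lt_of_le (by positivity) hx₀
  have hx1 : (1:ℝ) ≤ x := le_trans (by norm_num) hx₀
  set y := x ^ ((1:ℝ)/24) with hydef
  have hy0 : (0:ℝ) < y := Real.rpow_pos_of_pos hx0 _
  have hy300 : (300:ℝ) ≤ y := by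
    have h1 : ((300:ℝ)^24) ^ ((1:ℝ)/24) ≤ x ^ ((1:ℝ)/24) :=
      Real.rpow_le_rpow (by positivity) hx₀ (by norm_num)
    have h2 : ((300:ℝ)^24) ^ ((1:ℝ)/24) = 300 := by
      rw [← Real.rpow_natCast (300:ℝ) 24, ← Real.rpow_mul (by norm_num)]
      norm_num
    rw [hydef, ← h2]
    exact h1
  have hypow : ∀ k : ℕ, y^k = x ^ ((k:ℝ)/24) := by
    intro k
    rw [hydef, ← Real.rpow_natCast (x ^ ((1:ℝ)/24)) k, ← Real.rpow_mul hx0.le]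
    congr 1
    ring
  have hxy : x = y^24 := by
    rw [hypow 24]
    norm_num
  have hd2' : x - x' ≤ y^13 := by
    refine hd2.trans ?_
    rw [hypow 13]
    apply Real.rpow_le_rpow_of_exponent_le hx1
    norm_num
    linarith
  set M := ⌈y⌉₊ with hMdef
  have hM1 : y ≤ (M:ℝ) := Nat.le_ceil y
  have hM2 : (M:ℝ) ≤ 2*y := by
    have h1 : (M:ℝ) < y + 1 := Nat.ceil_lt_add_one hy0.le
    linarith
  set A := ⌈x ^ ((1:ℝ)/2 - c)⌉₊ with hAdef
  set B := ⌊Real.sqrt x⌋₊ with hBdef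
  have hzpos : (0:ℝ) < x ^ ((1:ℝ)/2 - c) := Real.rpow_pos_of_pos hx0 _
  have hA1 : 1 ≤ A := Nat.ceil_pos.mpr hzpos
  have hAy : y^11 ≤ (A:ℝ) := by
    have h1 : y^11 ≤ x ^ ((1:ℝ)/2 - c) := by
      rw [hypow 11]
      apply Real.rpow_le_rpow_of_exponent_le hx1
      norm_num
      linarith
    exact h1.trans (Nat.le_ceil _)
  obtain ⟨Ps, hP1, hP2, hP3, hP4, hP5, hP6⟩ :=
    build y x x' hy300 hxy hd1 hd2' M A B hM1 hM2 hA1 hAy (B+1-A) A le_rfl (by omega)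
  have hsqrt : Real.sqrt x = y^12 := by
    rw [Real.sqrt_eq_rpow, hypow 12]
    norm_num
  have hBy : (B:ℝ) ≤ y^12 := by
    rw [hBdef, ← hsqrt]
    exact Nat.floor_le (Real.sqrt_nonneg x)
  refine ⟨Ps, hP1, hP2, ?_, ?_, hP5, hP6⟩
  · rw [hP3]
    ext n
    simp only [Finset.mem_Ico, Finset.mem_filter, Finset.mem_Icc]
    constructor
    · intro ⟨h1, h2⟩
      refine ⟨⟨le_trans hA1 h1, by omega⟩, ?_⟩
      calc x ^ ((1:ℝ)/2 - c) ≤ (A:ℝ) := Nat.le_ceil _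
      _ ≤ (n:ℝ) := by exact_mod_cast h1
    · intro ⟨⟨h1, h2⟩, h3⟩
      exact ⟨Nat.ceil_le.mpr h3, by omega⟩
  · -- cardinality bound
    have hy1 : (1:ℝ) ≤ y := by linarith
    have hcast : (Ps.card:ℝ)*(M:ℝ) ≤ 16*((B+1-A:ℕ):ℝ) + 16*(M:ℝ)^3 := by
      have := hP4
      have h2 : ((Ps.card * M : ℕ):ℝ) ≤ ((16*(B+1-A) + 16*M^3 : ℕ):ℝ) := Nat.cast_le.mpr this
      push_cast at h2
      push_cast
      linarith
    have hBA : ((B+1-A:ℕ):ℝ) ≤ 2*y^12 := by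
      have h1 : ((B+1-A:ℕ):ℝ) ≤ (B:ℝ)+1 := by
        have : (B+1-A:ℕ) ≤ B+1 := by omega
        exact_mod_cast this
      have h2 : (1:ℝ) ≤ y^12 := by
        calc (1:ℝ) = 1^12 := by norm_num
        _ ≤ y^12 := pow_le_pow_left₀ (by norm_num) (by linarith) 12
      linarith
    have hM3 : (M:ℝ)^3 ≤ y^12 := by
      have h1 : (M:ℝ)^3 ≤ (2*y)^3 := pow_le_pow_left₀ (by positivity) hM2 3
      have h2 : (2*y)^3 = 8*y^3 := by ring
      have h3 : (8:ℝ) ≤ y^9 := by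
        calc (8:ℝ) ≤ 300^9 := by norm_num
        _ ≤ y^9 := pow_le_pow_left₀ (by norm_num) hy300 9
      have h4 := mul_le_mul_of_nonneg_left h3 (pow_pos hy0 3).le
      have h5 : y^3*y^9 = y^12 := by ring
      linarith
    have hfin : (Ps.card:ℝ)*(M:ℝ) ≤ 48*y^12 := by linarith
    have hcards : (Ps.card:ℝ) ≤ 48*y^11 := by
      have h1 : (Ps.card:ℝ)*y ≤ 48*y^11*y := by
        calc (Ps.card:ℝ)*y ≤ (Ps.card:ℝ)*(M:ℝ) :=
              mul_le_mul_of_nonneg_left hM1 (Nat.cast_nonneg _)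
        _ ≤ 48*y^12 := hfin
        _ = 48*y^11*y := by ring
      exact le_of_mul_le_mul_right h1 hy0
    have hexp : x ^ ((1:ℝ)/2 - 1/24) = y^11 := by
      rw [hypow 11]
      norm_num
    rw [hexp]
    nlinarith [pow_pos hy0 11]
end
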